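/- arXiv:1102.3014 — 5 statements merged into one kernel-verified Lean document; each statement's English description precedes it below -/
import Mathlib

section
/- Let H ∈ (1/2, 1), T > 0, and let ξ : [0,T] → ℝ be measurable with ∫₀ᵀ∫₀ᵀ φ(u−v) |ξ(u)| |ξ(v)| du dv < ∞. Then ∫₀ᵀ∫₀ᵀ φ(u−v) ξ(u) ξ(v) du dv ≥ 0; that is, the bilinear form ⟨ξ,η⟩_T = ∫₀ᵀ∫₀ᵀ φ(u−v) ξ(u) η(v) du dv is positive semidefinite (this is the claim that ⟨·,·⟩_T is a scalar product on the space |ℋ|). -/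
open MeasureTheory Set

/-- The fractional kernel `φ(x) = H(2H−1)|x|^{2H−2}`. -/
noncomputable def fracKernel (H x : ℝ) : ℝ := H * (2 * H - 1) * |x| ^ (2 * H - 2)

namespace FracKernelAux

/-- Truncated power `x ↦ x₊^κ`. -/
noncomputable def pp (κ x : ℝ) : ℝ := if 0 < x then x ^ κ else 0

lemma pp_nonneg (κ x : ℝ) : 0 ≤ pp κ x := by
  unfold pp; split
  · exact Real.rpow_nonneg (le_of_lt ‹_›) κ
  · exact le_refl 0

lemma measurable_pp (κ : ℝ) : Measurable (pp κ) :=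
  Measurable.ite measurableSet_Ioi (measurable_id.pow_const κ) measurable_const

lemma integrableOn_base {κ : ℝ} (hκ1 : -1 < κ) (hκ2 : κ < -(1/2)) {t : ℝ} (ht : 0 < t) :
    IntegrableOn (fun x => x ^ κ * (x + t) ^ κ) (Ioi (0:ℝ)) := by
  have hκ0 : κ ≤ 0 := by linarith
  have hm : AEStronglyMeasurable (fun x : ℝ => x ^ κ * (x + t) ^ κ)
      (volume.restrict (Ioi (0:ℝ))) := by
    exact (((measurable_id.pow_const κ).mul
      ((measurable_id.add_const t).pow_const κ)).aestronglyMeasurable).restrict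
  have h1 : IntegrableOn (fun x => x ^ κ * (x + t) ^ κ) (Ioc (0:ℝ) 1) := by
    have hbase : IntegrableOn (fun x : ℝ => x ^ κ) (Ioc (0:ℝ) 1) := by
      have := intervalIntegral.intervalIntegrable_rpow' (a := 0) (b := 1) hκ1
      rwa [intervalIntegrable_iff, uIoc_of_le zero_le_one] at this
    refine Integrable.mono' (hbase.mul_const (t ^ κ)) (hm.mono_measure
      (Measure.restrict_mono Ioc_subset_Ioi_self le_rfl)) ?_
    filter_upwards [ae_restrict_mem measurableSet_Ioc] with x hx
    have hx0 : (0:ℝ) < x := hx.1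
    rw [Real.norm_eq_abs, abs_of_nonneg
      (mul_nonneg (Real.rpow_nonneg hx0.le κ) (Real.rpow_nonneg (by linarith) κ))]
    exact mul_le_mul_of_nonneg_left
      (Real.rpow_le_rpow_of_nonpos ht (by linarith) hκ0) (Real.rpow_nonneg hx0.le κ)
  have h2 : IntegrableOn (fun x => x ^ κ * (x + t) ^ κ) (Ioi (1:ℝ)) := by
    have hbase : IntegrableOn (fun x : ℝ => x ^ (κ + κ)) (Ioi (1:ℝ)) :=
      integrableOn_Ioi_rpow_of_lt (by linarith) one_pos
    refine Integrable.mono' hbase (hm.mono_measure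
      (Measure.restrict_mono (Ioi_subset_Ioi zero_le_one) le_rfl)) ?_
    filter_upwards [ae_restrict_mem measurableSet_Ioi] with x hx
    have hx0 : (0:ℝ) < x := lt_trans one_pos hx
    rw [Real.norm_eq_abs, abs_of_nonneg
      (mul_nonneg (Real.rpow_nonneg hx0.le κ) (Real.rpow_nonneg (by linarith) κ)),
      Real.rpow_add hx0]
    exact mul_le_mul_of_nonneg_left
      (Real.rpow_le_rpow_of_nonpos hx0 (by linarith) hκ0) (Real.rpow_nonneg hx0.le κ)
  have hunion : Ioc (0:ℝ) 1 ∪ Ioi 1 = Ioi 0 := Ioc_union_Ioi_eq_Ioi zero_le_one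
  rw [← hunion]
  exact h1.union h2

/-- The constant `C κ = ∫_0^∞ x^κ (1+x)^κ dx`. -/
noncomputable def C (κ : ℝ) : ℝ := ∫ x in Ioi (0:ℝ), x ^ κ * (x + 1) ^ κ

lemma C_pos {κ : ℝ} (hκ1 : -1 < κ) (hκ2 : κ < -(1/2)) : 0 < C κ := by
  rw [C]
  refine (setIntegral_pos_iff_support_of_nonneg_ae ?_
    (integrableOn_base hκ1 hκ2 one_pos)).mpr ?_
  · filter_upwards [ae_restrict_mem measurableSet_Ioi] with x hx
    exact mul_nonneg (Real.rpow_nonneg (le_of_lt hx) κ)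
      (Real.rpow_nonneg (by linarith [mem_Ioi.mp hx]) κ)
  · have hsub : Ioi (0:ℝ) ⊆ Function.support (fun x => x ^ κ * (x + 1) ^ κ) ∩ Ioi 0 := by
      intro x hx
      have hx0 : (0:ℝ) < x := hx
      refine ⟨?_, hx⟩
      exact ne_of_gt (mul_pos (Real.rpow_pos_of_pos hx0 κ)
        (Real.rpow_pos_of_pos (by linarith) κ))
    calc (0 : ENNReal) < volume (Ioi (0:ℝ)) := by simp [Real.volume_Ioi]
      _ ≤ _ := measure_mono hsub

lemma integral_base {κ : ℝ} (hκ1 : -1 < κ) (hκ2 : κ < -(1/2)) {t : ℝ} (ht : 0 < t) :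
    ∫ x in Ioi (0:ℝ), x ^ κ * (x + t) ^ κ = t ^ (2*κ + 1) * C κ := by
  have ht' : t ≠ 0 := ne_of_gt ht
  have h := MeasureTheory.integral_comp_mul_left_Ioi
    (fun x => x ^ κ * (x + t) ^ κ) 0 ht
  simp only [mul_zero, smul_eq_mul] at h
  have h2 : ∫ x in Ioi (0:ℝ), (t * x) ^ κ * (t * x + t) ^ κ
      = t ^ κ * t ^ κ * C κ := by
    rw [C, ← integral_const_mul]
    apply setIntegral_congr_fun measurableSet_Ioi
    intro x hx
    have hx0 : (0:ℝ) < x := hx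
    dsimp only
    rw [show t * x + t = t * (x + 1) by ring, Real.mul_rpow ht.le hx0.le,
      Real.mul_rpow ht.le (by linarith)]
    ring
  rw [h2] at h
  have hI : ∫ x in Ioi (0:ℝ), x ^ κ * (x + t) ^ κ = t * (t ^ κ * t ^ κ * C κ) := by
    rw [h, ← mul_assoc, mul_inv_cancel₀ ht', one_mul]
  rw [hI, show 2*κ + 1 = κ + (κ + 1) by ring, Real.rpow_add ht,
    Real.rpow_add ht, Real.rpow_one]
  ring

lemma pp_kernel {κ : ℝ} (hκ1 : -1 < κ) (hκ2 : κ < -(1/2)) {u v : ℝ} (huv : v < u) :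
    Integrable (fun s => pp κ (u - s) * pp κ (v - s)) volume ∧
      (∫ s, pp κ (u - s) * pp κ (v - s)) = C κ * (u - v) ^ (2*κ + 1) := by
  set t := u - v with htdef
  have ht : 0 < t := sub_pos.mpr huv
  set G : ℝ → ℝ := fun r => pp κ (t + r) * pp κ r with hG
  have hGind : G = (Ioi (0:ℝ)).indicator (fun r => r ^ κ * (r + t) ^ κ) := by
    funext r
    by_cases hr : 0 < r
    · rw [indicator_of_mem (mem_Ioi.mpr hr)]
      have h1 : pp κ r = r ^ κ := if_pos hr
      have h2 : pp κ (t + r) = (t + r) ^ κ := if_pos (by linarith)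
      rw [hG]
      show pp κ (t + r) * pp κ r = r ^ κ * (r + t) ^ κ
      rw [h2, h1, add_comm t r]
      ring
    · rw [indicator_of_notMem (by simpa [mem_Ioi] using hr), hG]
      simp only [pp, if_neg hr, mul_zero]
  have hGint : Integrable G := by
    rw [hGind, integrable_indicator_iff measurableSet_Ioi]
    exact integrableOn_base hκ1 hκ2 ht
  have hGval : ∫ r, G r = C κ * t ^ (2*κ + 1) := by
    rw [hGind, integral_indicator measurableSet_Ioi, integral_base hκ1 hκ2 ht,
      mul_comm]
  have hFG : (fun s => pp κ (u - s) * pp κ (v - s)) = fun s => G (v - s) := by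
    funext s
    rw [hG]
    simp only
    rw [show t + (v - s) = u - s by rw [htdef]; ring]
  constructor
  · rw [hFG]; exact hGint.comp_sub_left v
  · rw [hFG, integral_sub_left_eq_self G volume v, hGval]

end FracKernelAux

open FracKernelAux in
/-- The bilinear form `⟨ξ,ξ⟩_T = ∫₀ᵀ∫₀ᵀ φ(u−v) ξ(u) ξ(v) du dv` is positive
semidefinite on measurable `ξ` with finite `|ℋ|`-norm. -/
theorem fracKernel_quadratic_form_nonneg
    (H T : ℝ) (hH : H ∈ Set.Ioo (1/2 : ℝ) 1) (hT : 0 < T)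
    (ξ : ℝ → ℝ) (hmeas : Measurable ξ)
    (hint : IntegrableOn
      (fun p : ℝ × ℝ => fracKernel H (p.1 - p.2) * |ξ p.1| * |ξ p.2|)
      (Set.Icc 0 T ×ˢ Set.Icc 0 T)) :
    0 ≤ ∫ u in Set.Icc (0:ℝ) T, ∫ v in Set.Icc (0:ℝ) T,
        fracKernel H (u - v) * ξ u * ξ v := by
  obtain ⟨hH1, hH2⟩ := hH
  set κ : ℝ := H - 3/2 with hκdef
  have hκ1 : -1 < κ := by rw [hκdef]; linarith
  have hκ2 : κ < -(1/2) := by rw [hκdef]; linarith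
  have hexp : 2 * H - 2 = 2 * κ + 1 := by rw [hκdef]; ring
  set c : ℝ := H * (2 * H - 1) with hcdef
  have hc : 0 < c := by
    apply mul_pos <;> linarith
  have hC := C_pos hκ1 hκ2
  have hc0 : c ≠ 0 := ne_of_gt hc
  have hC0 : C κ ≠ 0 := ne_of_gt hC
  have hfrac : ∀ x : ℝ, fracKernel H x = c * |x| ^ (2*κ + 1) := fun x => by
    unfold fracKernel
    rw [hexp, hcdef]
  set A : Set ℝ := Set.Icc (0:ℝ) T with hA
  set μA : Measure ℝ := volume.restrict A with hμA
  set ν : Measure (ℝ × ℝ) := μA.prod μA with hν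
  have hνr : (volume : Measure (ℝ × ℝ)).restrict (A ×ˢ A) = ν := by
    rw [hν, hμA, Measure.prod_restrict, MeasureTheory.Measure.volume_eq_prod]
  -- the diagonal is null
  have hdiag : ∀ᵐ p : ℝ × ℝ ∂ν, p.1 ≠ p.2 := by
    rw [ae_iff]
    have hset : {p : ℝ × ℝ | ¬ p.1 ≠ p.2} = {p : ℝ × ℝ | p.1 = p.2} := by
      ext p; simp
    rw [hset]
    have hms : MeasurableSet {p : ℝ × ℝ | p.1 = p.2} :=
      measurableSet_eq_fun measurable_fst measurable_snd
    rw [hν, Measure.prod_apply hms]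
    have hsec : ∀ u : ℝ, μA (Prod.mk u ⁻¹' {p : ℝ × ℝ | p.1 = p.2}) = 0 := by
      intro u
      have : (Prod.mk u ⁻¹' {p : ℝ × ℝ | p.1 = p.2}) = {u} := by
        ext x; simp [eq_comm]
      rw [this, hμA, Measure.restrict_apply (measurableSet_singleton u)]
      exact measure_mono_null (inter_subset_left) (measure_singleton u)
    simp [hsec]
  -- kernel representation for off-diagonal points
  have hker : ∀ u v : ℝ, u ≠ v →
      Integrable (fun s => pp κ (u - s) * pp κ (v - s)) volume ∧
        (∫ s, pp κ (u - s) * pp κ (v - s)) = C κ * |u - v| ^ (2*κ + 1) := by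
    intro u v hne
    rcases lt_or_gt_of_ne hne with h | h
    · have H2 := pp_kernel hκ1 hκ2 h
      have hcomm : (fun s => pp κ (u - s) * pp κ (v - s))
          = fun s => pp κ (v - s) * pp κ (u - s) := by funext s; ring
      rw [abs_sub_comm, abs_of_pos (sub_pos.mpr h), hcomm]
      exact H2
    · rw [abs_of_pos (sub_pos.mpr h)]
      exact pp_kernel hκ1 hκ2 h
  -- the triple-variable function
  set Φ : (ℝ × ℝ) × ℝ → ℝ := fun q =>
    (ξ q.1.1 * pp κ (q.1.1 - q.2)) * (ξ q.1.2 * pp κ (q.1.2 - q.2)) with hΦ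
  have hΦm : Measurable Φ := by
    apply Measurable.mul
    · exact (hmeas.comp (measurable_fst.comp measurable_fst)).mul
        ((measurable_pp κ).comp ((measurable_fst.comp measurable_fst).sub measurable_snd))
    · exact (hmeas.comp (measurable_snd.comp measurable_fst)).mul
        ((measurable_pp κ).comp ((measurable_snd.comp measurable_fst).sub measurable_snd))
  -- transported integrability hypothesis
  have hint' : Integrable
      (fun p : ℝ × ℝ => fracKernel H (p.1 - p.2) * |ξ p.1| * |ξ p.2|) ν := by
    rw [← hνr]
    exact hint
  -- integrability of Φ
  have hΦint : Integrable Φ (ν.prod volume) := by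
    refine (integrable_prod_iff hΦm.aestronglyMeasurable).mpr ⟨?_, ?_⟩
    · filter_upwards [hdiag] with p hp
      have heq : (fun s => Φ (p, s))
          = fun s => (ξ p.1 * ξ p.2) * (pp κ (p.1 - s) * pp κ (p.2 - s)) := by
        funext s; rw [hΦ]; ring
      rw [heq]
      exact ((hker p.1 p.2 hp).1).const_mul _
    · refine (hint'.const_mul (C κ / c)).congr ?_
      filter_upwards [hdiag] with p hp
      have heq : (fun s => ‖Φ (p, s)‖)
          = fun s => (|ξ p.1| * |ξ p.2|) * (pp κ (p.1 - s) * pp κ (p.2 - s)) := by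
        funext s
        rw [hΦ, Real.norm_eq_abs]
        simp only
        rw [abs_mul, abs_mul, abs_mul, abs_of_nonneg (pp_nonneg κ _),
          abs_of_nonneg (pp_nonneg κ _)]
        ring
      rw [heq, integral_const_mul, (hker p.1 p.2 hp).2, hfrac]
      field_simp
  -- integrability of the fracKernel quadratic form integrand
  have hfkm : Measurable (fun p : ℝ × ℝ => fracKernel H (p.1 - p.2) * ξ p.1 * ξ p.2) := by
    apply Measurable.mul
    apply Measurable.mul
    · exact (((measurable_fst.sub measurable_snd).abs.pow_const _).const_mul _)
    · exact hmeas.comp measurable_fst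
    · exact hmeas.comp measurable_snd
  have hQint : Integrable (fun p : ℝ × ℝ => fracKernel H (p.1 - p.2) * ξ p.1 * ξ p.2) ν := by
    refine hint'.mono' hfkm.aestronglyMeasurable ?_
    filter_upwards with p
    rw [Real.norm_eq_abs, abs_mul, abs_mul]
    have hfk : |fracKernel H (p.1 - p.2)| = fracKernel H (p.1 - p.2) := by
      rw [abs_of_nonneg]
      exact mul_nonneg hc.le (Real.rpow_nonneg (abs_nonneg _) _)
    rw [hfk]
  -- a.e. identity on the product
  have haeq : (fun p : ℝ × ℝ => fracKernel H (p.1 - p.2) * ξ p.1 * ξ p.2)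
      =ᵐ[ν] fun p => (c / C κ) * ∫ s, Φ (p, s) := by
    filter_upwards [hdiag] with p hp
    have heq : (fun s => Φ (p, s))
        = fun s => (ξ p.1 * ξ p.2) * (pp κ (p.1 - s) * pp κ (p.2 - s)) := by
      funext s; rw [hΦ]; ring
    rw [heq, integral_const_mul, (hker p.1 p.2 hp).2, hfrac]
    field_simp
  -- the squared function
  set g : ℝ → ℝ := fun s => ∫ u in A, ξ u * pp κ (u - s) with hg
  have h4 : ∀ s : ℝ, (∫ p, Φ (p, s) ∂ν) = g s * g s := by
    intro s
    rw [hν, hg]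
    exact integral_prod_mul (fun u => ξ u * pp κ (u - s)) (fun v => ξ v * pp κ (v - s))
  -- main computation
  have hswap : (∫ p, (∫ s, Φ (p, s)) ∂ν) = ∫ s, (∫ p, Φ (p, s) ∂ν) :=
    integral_integral_swap (f := fun p s => Φ (p, s)) hΦint
  have hmain : (∫ u in Set.Icc (0:ℝ) T, ∫ v in Set.Icc (0:ℝ) T,
      fracKernel H (u - v) * ξ u * ξ v)
      = (c / C κ) * ∫ s, g s * g s := by
    have h1 : (∫ u in Set.Icc (0:ℝ) T, ∫ v in Set.Icc (0:ℝ) T,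
        fracKernel H (u - v) * ξ u * ξ v)
        = ∫ p : ℝ × ℝ, fracKernel H (p.1 - p.2) * ξ p.1 * ξ p.2 ∂ν := by
      exact integral_integral hQint
    rw [h1, integral_congr_ae haeq, integral_const_mul, hswap]
    congr 1
    exact integral_congr_ae (Filter.Eventually.of_forall h4)
  rw [hmain]
  exact mul_nonneg (div_nonneg hc.le hC.le)
    (integral_nonneg fun s => mul_self_nonneg (g s))
end

section
/- Let H ∈ (1/2, 1) and T > 0. There exists a constant c > 0, depending only on H and T, such that for every measurable f : [0,T] → ℝ one has ∫₀ᵀ∫₀ᵀ φ(u−v) |f(u)| |f(v)| du dv ≤ c · ∫₀ᵀ |f(s)|² ds. In particular every f ∈ L²([0,T]) has finite |ℋ|-norm ‖f‖_{|ℋ|}² = ∫₀ᵀ∫₀ᵀ φ(u−v)|f(u)||f(v)| du dv. -/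
open MeasureTheory Set

lemma absRpow_integrableOn {α T : ℝ} (hα : -1 < α) (hT : 0 < T) :
    IntegrableOn (fun x : ℝ => |x| ^ α) (Icc (-T) T) := by
  have h1 : IntegrableOn (fun x : ℝ => |x| ^ α) (Ioo 0 T) := by
    refine ((intervalIntegral.integrableOn_Ioo_rpow_iff hT).2 hα).congr_fun (fun x hx => ?_) measurableSet_Ioo
    rw [abs_of_pos hx.1]
  have h2 : IntegrableOn (fun x : ℝ => |x| ^ α) (Ioo (-T) 0) := by
    rw [← (Measure.measurePreserving_neg (volume : Measure ℝ)).integrableOn_comp_preimage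
        (Homeomorph.neg ℝ).measurableEmbedding]
    simpa [Function.comp_def, abs_neg] using h1
  have e1 : IntegrableOn (fun x : ℝ => |x| ^ α) (Icc 0 T) :=
    h1.congr_set_ae Ioo_ae_eq_Icc.symm
  have e2 : IntegrableOn (fun x : ℝ => |x| ^ α) (Icc (-T) 0) :=
    h2.congr_set_ae Ioo_ae_eq_Icc.symm
  have : Icc (-T) 0 ∪ Icc 0 T = Icc (-T) T :=
    Icc_union_Icc_eq_Icc (by linarith) hT.le
  rw [← this]
  exact e2.union e1

/-- Continuous embedding of `L²([0,T])` into `|ℋ|`: there is a constant `c > 0`,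
depending only on `H` and `T`, such that for every measurable `f`,
`∫₀ᵀ∫₀ᵀ φ(u−v)|f(u)||f(v)| du dv ≤ c ∫₀ᵀ |f(s)|² ds`. -/
theorem L2_embeds_in_absH (H T : ℝ) (hH : H ∈ Set.Ioo (1/2 : ℝ) 1) (hT : 0 < T) :
    ∃ c : ℝ, 0 < c ∧ ∀ f : ℝ → ℝ, Measurable f →
      (∫⁻ p in Set.Icc (0:ℝ) T ×ˢ Set.Icc (0:ℝ) T,
          ENNReal.ofReal (fracKernel H (p.1 - p.2) * |f p.1| * |f p.2|))
        ≤ ENNReal.ofReal c *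
          ∫⁻ s in Set.Icc (0:ℝ) T, ENNReal.ofReal ((f s) ^ 2) := by
  obtain ⟨h1, h2⟩ := hH
  set α : ℝ := 2 * H - 2 with hαdef
  have hα : (-1 : ℝ) < α := by rw [hαdef]; linarith
  set K : ℝ := H * (2 * H - 1) with hKdef
  have hK : 0 < K := by
    apply mul_pos <;> linarith
  set g : ℝ → ENNReal := fun w => ENNReal.ofReal (|w| ^ α) with hgdef
  have hgmeas : Measurable g := by
    rw [hgdef]; measurability
  set C : ENNReal := ∫⁻ w in Icc (-T) T, g w with hCdef
  have hCfin : C < ⊤ := (absRpow_integrableOn hα hT).lintegral_lt_top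
  -- key bound on the inner integral
  have key : ∀ u ∈ Icc (0:ℝ) T, (∫⁻ v in Icc (0:ℝ) T, g (u - v)) ≤ C := by
    intro u hu
    have hmp : MeasurePreserving (fun v : ℝ => u - v) volume volume :=
      Measure.measurePreserving_sub_left volume u
    have := hmp.setLIntegral_comp_emb
      (MeasurableEquiv.subLeft u).measurableEmbedding g (Icc 0 T)
    have himg : (fun v : ℝ => u - v) '' Icc 0 T = Icc (u - T) u := by
      rw [image_const_sub_Icc]; simp
    calc (∫⁻ v in Icc (0:ℝ) T, g (u - v))
        = ∫⁻ w in Icc (u - T) u, g w := by rw [← himg]; exact this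
      _ ≤ C := lintegral_mono_set (fun x hx => ⟨by cases hu; cases hx; linarith,
          by cases hu; cases hx; linarith⟩)
  set c : ℝ := 2 * K * (C.toReal + 1) with hcdef
  have hCle : C ≤ ENNReal.ofReal (C.toReal + 1) :=
    calc C = ENNReal.ofReal C.toReal := (ENNReal.ofReal_toReal hCfin.ne).symm
      _ ≤ ENNReal.ofReal (C.toReal + 1) := ENNReal.ofReal_le_ofReal (by linarith)
  refine ⟨c, by positivity, fun f hf => ?_⟩
  set F : ℝ → ENNReal := fun s => ENNReal.ofReal (f s ^ 2) with hFdef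
  have hFmeas : Measurable F := ENNReal.measurable_ofReal.comp (hf.pow_const 2)
  set I : ENNReal := ∫⁻ s in Icc (0:ℝ) T, F s with hIdef
  -- pointwise bound
  have hpt : ∀ p : ℝ × ℝ,
      ENNReal.ofReal (fracKernel H (p.1 - p.2) * |f p.1| * |f p.2|)
        ≤ ENNReal.ofReal K * g (p.1 - p.2) * (F p.1 + F p.2) := by
    intro p
    have hx : (0:ℝ) ≤ |p.1 - p.2| ^ α := Real.rpow_nonneg (abs_nonneg _) _
    have hab : |f p.1| * |f p.2| ≤ f p.1 ^ 2 + f p.2 ^ 2 := by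
      nlinarith [sq_nonneg (|f p.1| - |f p.2|), sq_abs (f p.1), sq_abs (f p.2),
        abs_nonneg (f p.1), abs_nonneg (f p.2)]
    calc ENNReal.ofReal (fracKernel H (p.1 - p.2) * |f p.1| * |f p.2|)
        ≤ ENNReal.ofReal (K * |p.1 - p.2| ^ α * (f p.1 ^ 2 + f p.2 ^ 2)) := by
          apply ENNReal.ofReal_le_ofReal
          have : fracKernel H (p.1 - p.2) * |f p.1| * |f p.2|
              = K * |p.1 - p.2| ^ α * (|f p.1| * |f p.2|) := by
            simp only [fracKernel, hKdef, hαdef]; ring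
          rw [this]
          have hKx : (0:ℝ) ≤ K * |p.1 - p.2| ^ α := mul_nonneg hK.le hx
          exact mul_le_mul_of_nonneg_left hab hKx
      _ = ENNReal.ofReal K * g (p.1 - p.2) * (F p.1 + F p.2) := by
          rw [ENNReal.ofReal_mul (mul_nonneg hK.le hx), ENNReal.ofReal_mul hK.le,
            ENNReal.ofReal_add (sq_nonneg _) (sq_nonneg _)]
  -- main estimate
  have hprod : (volume : Measure (ℝ × ℝ)).restrict (Icc (0:ℝ) T ×ˢ Icc (0:ℝ) T)
      = (volume.restrict (Icc (0:ℝ) T)).prod (volume.restrict (Icc (0:ℝ) T)) := by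
    rw [Measure.volume_eq_prod, Measure.prod_restrict]
  have hmA : Measurable fun p : ℝ × ℝ => g (p.1 - p.2) * F p.1 :=
    (hgmeas.comp (measurable_fst.sub measurable_snd)).mul (hFmeas.comp measurable_fst)
  have hmB : Measurable fun p : ℝ × ℝ => g (p.1 - p.2) * F p.2 :=
    (hgmeas.comp (measurable_fst.sub measurable_snd)).mul (hFmeas.comp measurable_snd)
  have A1 : (∫⁻ p in Icc (0:ℝ) T ×ˢ Icc (0:ℝ) T, g (p.1 - p.2) * F p.1) ≤ C * I := by
    rw [hprod, lintegral_prod _ hmA.aemeasurable]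
    calc (∫⁻ u in Icc (0:ℝ) T, ∫⁻ v in Icc (0:ℝ) T, g (u - v) * F u)
        = ∫⁻ u in Icc (0:ℝ) T, (∫⁻ v in Icc (0:ℝ) T, g (u - v)) * F u := by
          refine lintegral_congr fun u => ?_
          have hm : Measurable fun v : ℝ => g (u - v) :=
            hgmeas.comp (measurable_const.sub measurable_id)
          exact lintegral_mul_const _ hm
      _ ≤ ∫⁻ u in Icc (0:ℝ) T, C * F u := by
          refine setLIntegral_mono (measurable_const.mul hFmeas) fun u hu => ?_
          exact mul_le_mul_left (key u hu) _
      _ = C * I := by rw [lintegral_const_mul _ hFmeas]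
  have A2 : (∫⁻ p in Icc (0:ℝ) T ×ˢ Icc (0:ℝ) T, g (p.1 - p.2) * F p.2) ≤ C * I := by
    rw [hprod, lintegral_prod_symm _ hmB.aemeasurable]
    calc (∫⁻ v in Icc (0:ℝ) T, ∫⁻ u in Icc (0:ℝ) T, g (u - v) * F v)
        = ∫⁻ v in Icc (0:ℝ) T, (∫⁻ u in Icc (0:ℝ) T, g (v - u)) * F v := by
          refine lintegral_congr fun v => ?_
          have hm : Measurable fun u : ℝ => g (v - u) :=
            hgmeas.comp (measurable_const.sub measurable_id)
          calc (∫⁻ u in Icc (0:ℝ) T, g (u - v) * F v)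
              = ∫⁻ u in Icc (0:ℝ) T, g (v - u) * F v := by
                refine lintegral_congr fun u => ?_
                simp only [hgdef]
                rw [abs_sub_comm]
            _ = (∫⁻ u in Icc (0:ℝ) T, g (v - u)) * F v := lintegral_mul_const _ hm
      _ ≤ ∫⁻ v in Icc (0:ℝ) T, C * F v := by
          refine setLIntegral_mono (measurable_const.mul hFmeas) fun v hv => ?_
          exact mul_le_mul_left (key v hv) _
      _ = C * I := by rw [lintegral_const_mul _ hFmeas]
  calc (∫⁻ p in Icc (0:ℝ) T ×ˢ Icc (0:ℝ) T,
          ENNReal.ofReal (fracKernel H (p.1 - p.2) * |f p.1| * |f p.2|))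
      ≤ ∫⁻ p in Icc (0:ℝ) T ×ˢ Icc (0:ℝ) T,
          ENNReal.ofReal K * g (p.1 - p.2) * (F p.1 + F p.2) :=
        lintegral_mono fun p => hpt p
    _ = ENNReal.ofReal K * ∫⁻ p in Icc (0:ℝ) T ×ˢ Icc (0:ℝ) T,
          (g (p.1 - p.2) * F p.1 + g (p.1 - p.2) * F p.2) := by
        rw [← lintegral_const_mul _ (show Measurable fun p : ℝ × ℝ => g (p.1 - p.2) * F p.1 + g (p.1 - p.2) * F p.2 from hmA.add hmB)]
        refine lintegral_congr fun p => ?_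
        ring
    _ = ENNReal.ofReal K * ((∫⁻ p in Icc (0:ℝ) T ×ˢ Icc (0:ℝ) T, g (p.1 - p.2) * F p.1)
          + ∫⁻ p in Icc (0:ℝ) T ×ˢ Icc (0:ℝ) T, g (p.1 - p.2) * F p.2) := by
        rw [lintegral_add_left hmA]
    _ ≤ ENNReal.ofReal K * (C * I + C * I) :=
        mul_le_mul_right (add_le_add A1 A2) _
    _ = ENNReal.ofReal K * (2 * C) * I := by ring
    _ ≤ ENNReal.ofReal K * (2 * ENNReal.ofReal (C.toReal + 1)) * I := by
        gcongr
    _ = ENNReal.ofReal c * I := by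
        rw [hcdef]
        rw [show (2 : ENNReal) = ENNReal.ofReal 2 by simp,
          ← ENNReal.ofReal_mul (by norm_num), ← ENNReal.ofReal_mul hK.le]
        ring_nf
end

section
/- The function t ↦ ‖σ‖_t² = ∫₀ᵗ∫₀ᵗ φ(u−v) σ(u) σ(v) du dv is differentiable at every t ∈ (0,T], with derivative (d/dt)(‖σ‖_t²) = 2 σ(t) σ̂(t), and this derivative depends continuously on t. Moreover, if in addition σ(t) ≠ 0 for every t ∈ [0,T], then 2 σ(t) σ̂(t) > 0 for every t ∈ (0,T]. -/
open MeasureTheory Set intervalIntegral Filter Topology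

/-- `σ̂(t) = ∫₀ᵗ φ(t−r) σ(r) dr`. -/
noncomputable def hatSigma (H : ℝ) (σ : ℝ → ℝ) (t : ℝ) : ℝ :=
  ∫ r in (0:ℝ)..t, fracKernel H (t - r) * σ r

/-- `‖σ‖_t² = ∫₀ᵗ∫₀ᵗ φ(u−v) σ(u) σ(v) du dv`. -/
noncomputable def fracNormSq (H : ℝ) (σ : ℝ → ℝ) (t : ℝ) : ℝ :=
  ∫ u in (0:ℝ)..t, ∫ v in (0:ℝ)..t, fracKernel H (u - v) * σ u * σ v

lemma intervalIntegrable_abs_rpow {p : ℝ} (hp : (-1:ℝ) < p) (a b : ℝ) :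
    IntervalIntegrable (fun x => |x| ^ p) volume a b := by
  have key : ∀ c : ℝ, IntervalIntegrable (fun x => |x| ^ p) volume 0 c := by
    have pos : ∀ c : ℝ, 0 ≤ c → IntervalIntegrable (fun x => |x| ^ p) volume 0 c := by
      intro c hc
      rw [intervalIntegrable_iff, uIoc_of_le hc]
      have h1 : IntegrableOn (fun x : ℝ => x ^ p) (Ioc 0 c) := by
        have := intervalIntegrable_rpow' (a := 0) (b := c) hp
        rwa [intervalIntegrable_iff, uIoc_of_le hc] at this
      exact h1.congr_fun (fun x hx => by rw [abs_of_pos hx.1]) measurableSet_Ioc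
    intro c
    rcases le_total 0 c with hc | hc
    · exact pos c hc
    · rw [IntervalIntegrable.iff_comp_neg]
      simp only [abs_neg, neg_zero]
      exact pos (-c) (by linarith)
  exact (key a).symm.trans (key b)

lemma intervalIntegrable_fracKernel {H : ℝ} (hH : 1/2 < H) (a b : ℝ) :
    IntervalIntegrable (fun x => fracKernel H x) volume a b := by
  have hp : (-1:ℝ) < 2 * H - 2 := by linarith
  exact (intervalIntegrable_abs_rpow hp a b).const_mul _

lemma intervalIntegrable_fracKernel_sub {H : ℝ} (hH : 1/2 < H) (t a b : ℝ) :
    IntervalIntegrable (fun r => fracKernel H (t - r)) volume a b := by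
  have := (intervalIntegrable_fracKernel hH (t - a) (t - b)).comp_sub_left t
  simpa using this

lemma measurable_fracKernel {H : ℝ} : Measurable (fracKernel H) :=
  measurable_const.mul (continuous_abs.measurable.pow measurable_const)

lemma fracKernel_nonneg {H : ℝ} (hH : 1/2 < H) (x : ℝ) : 0 ≤ fracKernel H x :=
  mul_nonneg (mul_nonneg (by linarith) (by linarith)) (Real.rpow_nonneg (abs_nonneg x) _)

lemma fracKernel_pos {H : ℝ} (hH : 1/2 < H) {x : ℝ} (hx : x ≠ 0) : 0 < fracKernel H x :=
  mul_pos (mul_pos (by linarith) (by linarith)) (Real.rpow_pos_of_pos (abs_pos.2 hx) _)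

lemma fracKernel_sub_comm (H u v : ℝ) : fracKernel H (u - v) = fracKernel H (v - u) := by
  unfold fracKernel; rw [abs_sub_comm]

lemma F_continuous {H T M : ℝ} (hH : 1/2 < H) (hT : 0 ≤ T) {σ' : ℝ → ℝ} (hσ' : Continuous σ')
    (hM : ∀ x, |σ' x| ≤ M) :
    Continuous (fun t => ∫ s in Ioc (0:ℝ) T,
      (Ioc (0:ℝ) t).indicator (fun s => fracKernel H s * σ' (t - s)) s) := by
  rw [continuous_iff_continuousAt]
  intro t₀
  apply continuousAt_of_dominated (bound := fun s => fracKernel H s * M)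
  · filter_upwards with t
    exact ((Measurable.indicator
      (measurable_fracKernel.mul (hσ'.measurable.comp (measurable_const.sub measurable_id)))
      measurableSet_Ioc).aestronglyMeasurable)
  · filter_upwards with t
    filter_upwards with s
    refine le_trans (norm_indicator_le_norm_self _ _) ?_
    rw [Real.norm_eq_abs, abs_mul, abs_of_nonneg (fracKernel_nonneg hH s)]
    exact mul_le_mul_of_nonneg_left (hM _) (fracKernel_nonneg hH s)
  · have : IntervalIntegrable (fun s => fracKernel H s * M) volume 0 T :=
      (intervalIntegrable_fracKernel hH 0 T).mul_const M
    rw [intervalIntegrable_iff, uIoc_of_le hT] at this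
    exact this
  · have hae : ∀ᵐ s ∂(volume.restrict (Ioc (0:ℝ) T)), s ≠ t₀ := by
      refine ae_restrict_of_ae ?_
      have h0 : (volume : Measure ℝ) {t₀} = 0 := measure_singleton t₀
      filter_upwards [measure_eq_zero_iff_ae_notMem.mp h0] with s hs
      simpa using hs
    filter_upwards [hae] with s hs
    by_cases hs0 : 0 < s
    · rcases lt_or_gt_of_ne hs with h | h
      · -- s < t₀
        have hc : ContinuousAt (fun t => fracKernel H s * σ' (t - s)) t₀ :=
          (continuous_const.mul (hσ'.comp (continuous_id.sub continuous_const))).continuousAt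
        have heq : (fun t => (Ioc (0:ℝ) t).indicator (fun s => fracKernel H s * σ' (t - s)) s)
            =ᶠ[𝓝 t₀] fun t => fracKernel H s * σ' (t - s) := by
          filter_upwards [eventually_gt_nhds h] with t ht
          exact indicator_of_mem (mem_Ioc.mpr ⟨hs0, ht.le⟩) _
        have hval : (Ioc (0:ℝ) t₀).indicator (fun s => fracKernel H s * σ' (t₀ - s)) s
            = fracKernel H s * σ' (t₀ - s) := indicator_of_mem (mem_Ioc.mpr ⟨hs0, h.le⟩) _
        have : Tendsto (fun t => (Ioc (0:ℝ) t).indicator (fun s => fracKernel H s * σ' (t - s)) s)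
            (𝓝 t₀) (𝓝 (fracKernel H s * σ' (t₀ - s))) := Tendsto.congr' heq.symm hc.tendsto
        simpa [ContinuousAt, hval] using this
      · -- t₀ < s
        have heq : (fun t => (Ioc (0:ℝ) t).indicator (fun s => fracKernel H s * σ' (t - s)) s)
            =ᶠ[𝓝 t₀] fun _ => (0:ℝ) := by
          filter_upwards [eventually_lt_nhds h] with t ht
          exact indicator_of_notMem (fun hm => absurd hm.2 (not_le.2 ht)) _
        have hval : (Ioc (0:ℝ) t₀).indicator (fun s => fracKernel H s * σ' (t₀ - s)) s = 0 :=
          indicator_of_notMem (fun hm => absurd hm.2 (not_le.2 h)) _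
        have : Tendsto (fun t => (Ioc (0:ℝ) t).indicator (fun s => fracKernel H s * σ' (t - s)) s)
            (𝓝 t₀) (𝓝 (0:ℝ)) := Tendsto.congr' heq.symm tendsto_const_nhds
        simpa [ContinuousAt, hval] using this
    · have hz : ∀ t, (Ioc (0:ℝ) t).indicator (fun s => fracKernel H s * σ' (t - s)) s = 0 :=
        fun t => indicator_of_notMem (fun hm => hs0 hm.1) _
      simpa [ContinuousAt, hz] using (tendsto_const_nhds : Tendsto (fun _ : ℝ => (0:ℝ)) (𝓝 t₀) _)

lemma fubini_key {H M : ℝ} (hH : 1/2 < H) {σ' : ℝ → ℝ} (hσ' : Continuous σ')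
    (hM : ∀ x, |σ' x| ≤ M) {t : ℝ} (ht0 : 0 ≤ t) :
    (∫ u in (0:ℝ)..t, ∫ v in (0:ℝ)..t, fracKernel H (u - v) * σ' u * σ' v)
      = 2 * ∫ u in (0:ℝ)..t, ∫ v in (0:ℝ)..u, fracKernel H (u - v) * σ' u * σ' v := by
  set μ := volume.restrict (Ioc (0:ℝ) t) with hμ
  haveI : IsFiniteMeasure μ := ⟨by
    rw [hμ, Measure.restrict_apply_univ]; exact measure_Ioc_lt_top⟩
  set k : ℝ → ℝ → ℝ := fun u v => fracKernel H (u - v) * σ' u * σ' v with hk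
  have hksymm : ∀ u v, k u v = k v u := by
    intro u v; simp only [hk]; rw [fracKernel_sub_comm]; ring
  have hkv : ∀ u a b, IntervalIntegrable (fun v => k u v) volume a b := fun u a b =>
    ((intervalIntegrable_fracKernel_sub hH u a b).mul_const (σ' u)).mul_continuousOn
      hσ'.continuousOn
  have hkmeas : AEStronglyMeasurable (fun z : ℝ × ℝ => k z.1 z.2) (μ.prod μ) :=
    (((measurable_fracKernel.comp (measurable_fst.sub measurable_snd)).mul
      (hσ'.measurable.comp measurable_fst)).mul
      (hσ'.measurable.comp measurable_snd)).aestronglyMeasurable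
  have hMM : (0:ℝ) ≤ M * M := by
    have := (abs_nonneg (σ' 0)).trans (hM 0); positivity
  set C : ℝ := (∫ w in (-t)..t, fracKernel H w) * (M * M) with hC
  have hnormk : ∀ u v, ‖k u v‖ ≤ fracKernel H (u - v) * (M * M) := by
    intro u v
    rw [Real.norm_eq_abs, hk]
    calc |fracKernel H (u - v) * σ' u * σ' v|
        = fracKernel H (u - v) * (|σ' u| * |σ' v|) := by
          rw [abs_mul, abs_mul, abs_of_nonneg (fracKernel_nonneg hH _)]; ring
      _ ≤ fracKernel H (u - v) * (M * M) := by
          refine mul_le_mul_of_nonneg_left ?_ (fracKernel_nonneg hH _)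
          exact mul_le_mul (hM u) (hM v) (abs_nonneg _) ((abs_nonneg _).trans (hM u))
  have hIntBound : ∀ u ∈ Ioc (0:ℝ) t, (∫ v, ‖k u v‖ ∂μ) ≤ C := by
    intro u hu
    have l1 : (∫ v, ‖k u v‖ ∂μ) = ∫ v in (0:ℝ)..t, ‖k u v‖ := (integral_of_le ht0).symm
    have l2 : (∫ v in (0:ℝ)..t, ‖k u v‖)
        ≤ ∫ v in (0:ℝ)..t, fracKernel H (u - v) * (M * M) := by
      refine integral_mono_on ht0 ((hkv u 0 t).norm)
        (((intervalIntegrable_fracKernel_sub hH u 0 t).mul_const _)) ?_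
      exact fun x _ => hnormk u x
    have l3 : (∫ v in (0:ℝ)..t, fracKernel H (u - v) * (M * M))
        = (∫ v in (0:ℝ)..t, fracKernel H (u - v)) * (M * M) := integral_mul_const _ _
    have l4 : (∫ v in (0:ℝ)..t, fracKernel H (u - v))
        = ∫ w in (u - t)..(u - 0), fracKernel H w :=
      integral_comp_sub_left (a := 0) (b := t) (fracKernel H) u
    have l5 : (∫ w in (u - t)..(u - 0), fracKernel H w) ≤ ∫ w in (-t)..t, fracKernel H w := by
      refine integral_mono_interval (by linarith [hu.1]) (by linarith) (by simpa using hu.2)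
        ?_ (intervalIntegrable_fracKernel hH (-t) t)
      filter_upwards with x using fracKernel_nonneg hH x
    rw [l1, hC]
    refine le_trans l2 ?_
    rw [l3]
    exact mul_le_mul_of_nonneg_right (l4 ▸ l5) hMM
  have hkint : Integrable (fun z : ℝ × ℝ => k z.1 z.2) (μ.prod μ) := by
    rw [integrable_prod_iff hkmeas]
    constructor
    · exact Eventually.of_forall fun u => (hkv u 0 t).1
    · refine Integrable.mono' (integrable_const C) hkmeas.norm.integral_prod_right' ?_
      filter_upwards [ae_restrict_mem measurableSet_Ioc] with u hu
      rw [Real.norm_eq_abs, abs_of_nonneg (integral_nonneg fun v => norm_nonneg _)]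
      exact hIntBound u hu
  set s₁ : Set (ℝ × ℝ) := {z : ℝ × ℝ | z.2 ≤ z.1} with hs₁def
  have hs₁ : MeasurableSet s₁ := measurableSet_le measurable_snd measurable_fst
  set k₁ : ℝ × ℝ → ℝ := s₁.indicator (fun z => k z.1 z.2) with hk₁
  have hk₁int : Integrable k₁ (μ.prod μ) := hkint.indicator hs₁
  have h₁ : ∀ u, (fun v => k₁ (u, v)) = (Iic u).indicator (fun v => k u v) := by
    intro u; funext v
    by_cases h : v ≤ u
    · rw [hk₁, indicator_of_mem (by exact h), indicator_of_mem (by exact h)]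
    · rw [hk₁, indicator_of_notMem (by exact h), indicator_of_notMem (by exact h)]
  have h₂ : ∀ v, (fun u => k₁ (u, v)) = (Ici v).indicator (fun u => k u v) := by
    intro v; funext u
    by_cases h : v ≤ u
    · rw [hk₁, indicator_of_mem (by exact h), indicator_of_mem (by exact h)]
    · rw [hk₁, indicator_of_notMem (by exact h), indicator_of_notMem (by exact h)]
  have hg₁ : ∀ u ∈ Ioc (0:ℝ) t, (∫ v, k₁ (u, v) ∂μ) = ∫ v in (0:ℝ)..u, k u v := by
    intro u hu
    rw [h₁ u, hμ, MeasureTheory.integral_indicator measurableSet_Iic,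
      Measure.restrict_restrict measurableSet_Iic]
    have hset : Iic u ∩ Ioc 0 t = Ioc 0 u := by
      ext x
      simp only [mem_inter_iff, mem_Iic, mem_Ioc]
      exact ⟨fun ⟨h1, h2, h3⟩ => ⟨h2, h1⟩, fun ⟨h1, h2⟩ => ⟨h2, h1, h2.trans hu.2⟩⟩
    rw [hset, ← integral_of_le hu.1.le]
  have hg₂ : ∀ v ∈ Ioc (0:ℝ) t, (∫ u, k₁ (u, v) ∂μ) = ∫ x in v..t, k v x := by
    intro v hv
    rw [h₂ v, hμ, MeasureTheory.integral_indicator measurableSet_Ici,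
      Measure.restrict_restrict measurableSet_Ici]
    have hset : Ici v ∩ Ioc 0 t = Icc v t := by
      ext x
      simp only [mem_inter_iff, mem_Ici, mem_Ioc, mem_Icc]
      exact ⟨fun ⟨h1, _, h3⟩ => ⟨h1, h3⟩, fun ⟨h1, h2⟩ => ⟨h1, hv.1.trans_le h1, h2⟩⟩
    rw [hset, integral_Icc_eq_integral_Ioc, ← integral_of_le hv.2]
    exact integral_congr fun x _ => hksymm x v
  have hint₁ : IntervalIntegrable (fun u => ∫ v in (0:ℝ)..u, k u v) volume 0 t := by
    rw [intervalIntegrable_iff, uIoc_of_le ht0]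
    refine (hk₁int.integral_prod_left).congr ?_
    filter_upwards [ae_restrict_mem measurableSet_Ioc] with u hu using hg₁ u hu
  have hint₂ : IntervalIntegrable (fun u => ∫ x in u..t, k u x) volume 0 t := by
    rw [intervalIntegrable_iff, uIoc_of_le ht0]
    refine (hk₁int.integral_prod_right).congr ?_
    filter_upwards [ae_restrict_mem measurableSet_Ioc] with v hv using hg₂ v hv
  have hS : (∫ u in (0:ℝ)..t, ∫ v in (0:ℝ)..u, k u v)
      = ∫ v in (0:ℝ)..t, ∫ x in v..t, k v x := by
    have e1 : (∫ u in (0:ℝ)..t, ∫ v in (0:ℝ)..u, k u v) = ∫ z, k₁ z ∂(μ.prod μ) := by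
      rw [integral_of_le ht0, MeasureTheory.integral_prod _ hk₁int]
      refine integral_congr_ae ?_
      filter_upwards [ae_restrict_mem measurableSet_Ioc] with u hu using (hg₁ u hu).symm
    have e2 : (∫ z, k₁ z ∂(μ.prod μ)) = ∫ v in (0:ℝ)..t, ∫ x in v..t, k v x := by
      rw [integral_of_le ht0, MeasureTheory.integral_prod_symm _ hk₁int]
      refine integral_congr_ae ?_
      filter_upwards [ae_restrict_mem measurableSet_Ioc] with v hv using hg₂ v hv
    rw [e1, e2]
  have hfns : (∫ u in (0:ℝ)..t, ∫ v in (0:ℝ)..t, k u v)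
      = ∫ u in (0:ℝ)..t, ((∫ v in (0:ℝ)..u, k u v) + ∫ x in u..t, k u x) := by
    refine integral_congr fun u _ => ?_
    exact (integral_add_adjacent_intervals (hkv u 0 u) (hkv u u t)).symm
  calc (∫ u in (0:ℝ)..t, ∫ v in (0:ℝ)..t, k u v)
      = (∫ u in (0:ℝ)..t, (∫ v in (0:ℝ)..u, k u v)) + ∫ u in (0:ℝ)..t, ∫ x in u..t, k u x := by
        rw [hfns, integral_add hint₁ hint₂]
    _ = 2 * ∫ u in (0:ℝ)..t, (∫ v in (0:ℝ)..u, k u v) := by rw [← hS]; ring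

/-- The map `t ↦ ‖σ‖_t²` is differentiable on `(0,T]` with derivative
`2 σ(t) σ̂(t)` depending continuously on `t`; this derivative is positive when
`σ` never vanishes on `[0,T]`. -/
theorem fracNormSq_hasDeriv
    (H T : ℝ) (hH : H ∈ Set.Ioo (1/2 : ℝ) 1) (hT : 0 < T)
    (σ : ℝ → ℝ) (hσ : ContinuousOn σ (Set.Icc 0 T)) :
    (∀ t ∈ Set.Ioc (0:ℝ) T,
        HasDerivWithinAt (fracNormSq H σ) (2 * σ t * hatSigma H σ t) (Set.Icc 0 T) t)
    ∧ ContinuousOn (fun t => 2 * σ t * hatSigma H σ t) (Set.Ioc 0 T)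
    ∧ ((∀ t ∈ Set.Icc (0:ℝ) T, σ t ≠ 0) →
        ∀ t ∈ Set.Ioc (0:ℝ) T, 0 < 2 * σ t * hatSigma H σ t) := by
  obtain ⟨hH1, _⟩ := hH
  -- continuous bounded extension of σ
  set σ' : ℝ → ℝ := fun x => σ (max 0 (min T x)) with hσ'def
  have hproj : ∀ x : ℝ, max 0 (min T x) ∈ Icc (0:ℝ) T :=
    fun x => ⟨le_max_left _ _, max_le hT.le (min_le_left _ _)⟩
  have hσ'cont : Continuous σ' :=
    hσ.comp_continuous (continuous_const.max (continuous_const.min continuous_id)) hproj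
  have hσ'eq : ∀ x ∈ Icc (0:ℝ) T, σ' x = σ x := by
    intro x hx
    rw [hσ'def]
    simp only [min_eq_right hx.2, max_eq_right hx.1]
  obtain ⟨M, hMb⟩ := (isCompact_Icc (a := (0:ℝ)) (b := T)).exists_bound_of_continuousOn hσ
  have hM : ∀ x, |σ' x| ≤ M := fun x => by
    rw [hσ'def, ← Real.norm_eq_abs]; exact hMb _ (hproj x)
  -- hatSigma agrees for σ and σ'
  have hhat : ∀ t ∈ Icc (0:ℝ) T, hatSigma H σ t = hatSigma H σ' t := by
    intro t ht
    refine integral_congr fun r hr => ?_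
    rw [uIcc_of_le ht.1] at hr
    rw [hσ'eq r ⟨hr.1, hr.2.trans ht.2⟩]
  -- the function F, continuous, equal to hatSigma H σ' on [0,T]
  set F : ℝ → ℝ := fun t => ∫ s in Ioc (0:ℝ) T,
      (Ioc (0:ℝ) t).indicator (fun s => fracKernel H s * σ' (t - s)) s with hF
  have hFcont : Continuous F := F_continuous hH1 hT.le hσ'cont hM
  have hFeq : ∀ t ∈ Icc (0:ℝ) T, F t = hatSigma H σ' t := by
    intro t ht
    have h1 : F t = ∫ s in Ioc (0:ℝ) t, fracKernel H s * σ' (t - s) := by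
      show (∫ s in Ioc (0:ℝ) T,
        (Ioc (0:ℝ) t).indicator (fun s => fracKernel H s * σ' (t - s)) s) = _
      rw [MeasureTheory.integral_indicator measurableSet_Ioc,
        Measure.restrict_restrict measurableSet_Ioc,
        inter_eq_left.mpr (Ioc_subset_Ioc_right ht.2)]
    rw [h1, ← integral_of_le ht.1]
    have h2 := integral_comp_sub_left (a := (0:ℝ)) (b := t)
      (fun r => fracKernel H (t - r) * σ' r) t
    simp only [sub_sub_cancel, sub_zero, sub_self] at h2
    rw [hatSigma, ← h2]
  set g : ℝ → ℝ := fun u => σ' u * F u with hg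
  have hgcont : Continuous g := hσ'cont.mul hFcont
  -- key identity
  have hkey : ∀ t ∈ Icc (0:ℝ) T, fracNormSq H σ t = 2 * ∫ u in (0:ℝ)..t, g u := by
    intro t ht
    have e0 : fracNormSq H σ t
        = ∫ u in (0:ℝ)..t, ∫ v in (0:ℝ)..t, fracKernel H (u - v) * σ' u * σ' v := by
      rw [fracNormSq]
      refine integral_congr fun u hu => ?_
      rw [uIcc_of_le ht.1] at hu
      have hu' : u ∈ Icc (0:ℝ) T := ⟨hu.1, hu.2.trans ht.2⟩
      refine integral_congr fun v hv => ?_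
      rw [uIcc_of_le ht.1] at hv
      have hv' : v ∈ Icc (0:ℝ) T := ⟨hv.1, hv.2.trans ht.2⟩
      rw [hσ'eq u hu', hσ'eq v hv']
    rw [e0, fubini_key hH1 hσ'cont hM ht.1]
    congr 1
    refine integral_congr fun u hu => ?_
    rw [uIcc_of_le ht.1] at hu
    have hu' : u ∈ Icc (0:ℝ) T := ⟨hu.1, hu.2.trans ht.2⟩
    have e1 : (∫ v in (0:ℝ)..u, fracKernel H (u - v) * σ' u * σ' v)
        = σ' u * ∫ v in (0:ℝ)..u, fracKernel H (u - v) * σ' v := by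
      rw [← intervalIntegral.integral_const_mul]
      exact integral_congr fun v _ => by ring
    rw [e1]
    show σ' u * (∫ v in (0:ℝ)..u, fracKernel H (u - v) * σ' v) = σ' u * F u
    rw [hFeq u hu', hatSigma]
  -- derivative values agree on Icc 0 T
  have hval : ∀ t ∈ Icc (0:ℝ) T, 2 * g t = 2 * σ t * hatSigma H σ t := by
    intro t ht
    rw [hg]
    show 2 * (σ' t * F t) = _
    rw [hFeq t ht, hσ'eq t ht, ← hhat t ht]
    ring
  refine ⟨?_, ?_, ?_⟩
  · intro t ht
    have ht' : t ∈ Icc (0:ℝ) T := ⟨ht.1.le, ht.2⟩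
    have hd : HasDerivAt (fun x => 2 * ∫ u in (0:ℝ)..x, g u) (2 * g t) t := by
      refine HasDerivAt.const_mul 2 ?_
      exact integral_hasDerivAt_right (hgcont.intervalIntegrable 0 t)
        (hgcont.stronglyMeasurable.stronglyMeasurableAtFilter) hgcont.continuousAt
    have hdw : HasDerivWithinAt (fun x => 2 * ∫ u in (0:ℝ)..x, g u) (2 * g t) (Icc 0 T) t :=
      hd.hasDerivWithinAt
    have := hdw.congr (fun x hx => hkey x hx) (hkey t ht')
    rwa [hval t ht'] at this
  · refine ((hgcont.const_smul (2:ℝ)).continuousOn (s := Ioc 0 T)).congr ?_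
    intro x hx
    have := (hval x ⟨hx.1.le, hx.2⟩).symm
    simpa using this
  · intro hnz t ht
    have ht' : t ∈ Icc (0:ℝ) T := ⟨ht.1.le, ht.2⟩
    -- constant sign of σ
    have hsign : ∀ x ∈ Icc (0:ℝ) T, ∀ y ∈ Icc (0:ℝ) T, 0 < σ x * σ y := by
      intro x hx y hy
      rcases lt_or_gt_of_ne (mul_ne_zero (hnz x hx) (hnz y hy)) with h | h
      · exfalso
        have hIcc : uIcc x y ⊆ Icc 0 T := by
          rw [← uIcc_of_le (le_trans hx.1 hx.2)]
          exact uIcc_subset_uIcc (by rwa [uIcc_of_le hT.le]) (by rwa [uIcc_of_le hT.le])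
        have h0 : (0:ℝ) ∈ uIcc (σ x) (σ y) := by
          rcases mul_neg_iff.mp h with ⟨h1, h2⟩ | ⟨h1, h2⟩
          · exact mem_uIcc.mpr (Or.inr ⟨h2.le, h1.le⟩)
          · exact mem_uIcc.mpr (Or.inl ⟨h1.le, h2.le⟩)
        obtain ⟨z, hz, hz0⟩ := intermediate_value_uIcc (hσ.mono hIcc) h0
        exact hnz z (hIcc hz) hz0
      · exact h
    have base : IntervalIntegrable (fun r => fracKernel H (t - r) * σ r) volume 0 t := by
      refine (intervalIntegrable_fracKernel_sub hH1 t 0 t).mul_continuousOn (hσ.mono ?_)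
      rw [uIcc_of_le ht.1.le]
      exact Icc_subset_Icc le_rfl ht.2
    have hInt : IntervalIntegrable (fun r => σ t * (fracKernel H (t - r) * σ r)) volume 0 t :=
      base.const_mul (σ t)
    have hpos : (0:ℝ) < ∫ r in (0:ℝ)..t, σ t * (fracKernel H (t - r) * σ r) := by
      refine intervalIntegral_pos_of_pos_on hInt ?_ ht.1
      intro x hx
      have hx' : x ∈ Icc (0:ℝ) T := ⟨hx.1.le, hx.2.le.trans ht.2⟩
      have hk : 0 < fracKernel H (t - x) := fracKernel_pos hH1 (sub_ne_zero.mpr hx.2.ne')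
      have := hsign t ht' x hx'
      nlinarith
    have : σ t * hatSigma H σ t = ∫ r in (0:ℝ)..t, σ t * (fracKernel H (t - r) * σ r) := by
      rw [hatSigma, ← intervalIntegral.integral_const_mul]
    nlinarith [this ▸ hpos]
end

section
/- Assume in addition that σ(t) ≠ 0 for every t ∈ [0,T]. Then there exists a constant M > 0 (depending on H, T and σ) such that (1/M) · t^{2H−1} ≤ σ̂(t)/σ(t) ≤ M · t^{2H−1} for every t ∈ [0,T]. -/
open MeasureTheory Set intervalIntegral

lemma kernel_eqOn (H t : ℝ) (ht : 0 ≤ t) :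
    Set.EqOn (fun r => fracKernel H (t - r))
      (fun r => H * (2 * H - 1) * (t - r) ^ (2 * H - 2)) (Set.uIcc 0 t) := by
  intro r hr
  rw [Set.uIcc_of_le ht] at hr
  simp only [fracKernel]
  rw [abs_of_nonneg (by linarith [hr.2] : (0:ℝ) ≤ t - r)]

lemma kernel_intble (H t : ℝ) (hH : H ∈ Set.Ioo (1/2 : ℝ) 1) (ht : 0 ≤ t) :
    IntervalIntegrable (fun r => fracKernel H (t - r)) volume 0 t := by
  have h1 : (-1:ℝ) < 2 * H - 2 := by linarith [hH.1]
  have base : IntervalIntegrable (fun x : ℝ => x ^ (2 * H - 2)) volume 0 t :=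
    intervalIntegrable_rpow' h1
  have comp : IntervalIntegrable (fun r => (t - r) ^ (2 * H - 2)) volume 0 t := by
    simpa using (base.comp_sub_left t).symm
  have comp2 : IntervalIntegrable
      (fun r => H * (2 * H - 1) * (t - r) ^ (2 * H - 2)) volume 0 t := comp.const_mul _
  exact comp2.congr <| by
    intro r hr
    have : r ∈ Set.uIcc 0 t := by
      rw [Set.uIoc_of_le ht] at hr
      exact Set.mem_uIcc.2 (Or.inl ⟨le_of_lt hr.1, hr.2⟩)
    exact ((kernel_eqOn H t ht) this).symm

lemma kernel_integral (H t : ℝ) (hH : H ∈ Set.Ioo (1/2 : ℝ) 1) (ht : 0 ≤ t) :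
    ∫ r in (0:ℝ)..t, fracKernel H (t - r) = H * t ^ (2 * H - 1) := by
  have h1 : (-1:ℝ) < 2 * H - 2 := by linarith [hH.1]
  have h2 : (2 * H - 1 : ℝ) ≠ 0 := by
    have := hH.1; intro h; linarith [hH.1]
  rw [intervalIntegral.integral_congr (kernel_eqOn H t ht)]
  rw [intervalIntegral.integral_const_mul]
  have : (∫ r in (0:ℝ)..t, (t - r) ^ (2 * H - 2)) = ∫ x in (0:ℝ)..t, x ^ (2 * H - 2) := by
    rw [intervalIntegral.integral_comp_sub_left (fun x => x ^ (2 * H - 2)) t]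
    norm_num
  rw [this, integral_rpow (Or.inl h1)]
  have h3 : (2 * H - 2 + 1 : ℝ) = 2 * H - 1 := by ring
  rw [h3, Real.zero_rpow h2]
  rw [sub_zero]
  field_simp
  rw [mul_div_right_comm, mul_div_cancel_right₀ _ (by linarith [hH.1] : H * 2 - 1 ≠ 0)]

lemma hatSigma_bounds (H T : ℝ) (hH : H ∈ Set.Ioo (1/2 : ℝ) 1)
    (σ : ℝ → ℝ) (hσ : ContinuousOn σ (Set.Icc 0 T)) (a b : ℝ)
    (hb : ∀ r ∈ Set.Icc (0:ℝ) T, a ≤ σ r ∧ σ r ≤ b)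
    (t : ℝ) (ht : t ∈ Set.Icc (0:ℝ) T) :
    a * (H * t ^ (2 * H - 1)) ≤ hatSigma H σ t ∧
      hatSigma H σ t ≤ b * (H * t ^ (2 * H - 1)) := by
  have ht0 : (0:ℝ) ≤ t := ht.1
  have hsub : Set.uIcc (0:ℝ) t ⊆ Set.Icc 0 T := by
    rw [Set.uIcc_of_le ht0]
    exact Set.Icc_subset_Icc le_rfl ht.2
  have ki := kernel_intble H t hH ht0
  have pi : IntervalIntegrable (fun r => fracKernel H (t - r) * σ r) volume 0 t :=
    ki.mul_continuousOn (hσ.mono hsub)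
  have knn : ∀ r ∈ Set.Icc (0:ℝ) t, 0 ≤ fracKernel H (t - r) := by
    intro r _
    have : (0:ℝ) ≤ |t - r| ^ (2 * H - 2) := Real.rpow_nonneg (abs_nonneg _) _
    have hc : (0:ℝ) < H * (2 * H - 1) := by
      have := hH.1; have := hH.2; nlinarith
    exact mul_nonneg hc.le this
  constructor
  · have : (∫ r in (0:ℝ)..t, fracKernel H (t - r) * a) ≤
        ∫ r in (0:ℝ)..t, fracKernel H (t - r) * σ r := by
      apply intervalIntegral.integral_mono_on ht0 (ki.mul_const a) pi
      intro r hr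
      exact mul_le_mul_of_nonneg_left ((hb r (Set.Icc_subset_Icc le_rfl ht.2 hr)).1)
        (knn r hr)
    rwa [intervalIntegral.integral_mul_const, kernel_integral H t hH ht0,
      mul_comm] at this
  · have : (∫ r in (0:ℝ)..t, fracKernel H (t - r) * σ r) ≤
        ∫ r in (0:ℝ)..t, fracKernel H (t - r) * b := by
      apply intervalIntegral.integral_mono_on ht0 pi (ki.mul_const b)
      intro r hr
      exact mul_le_mul_of_nonneg_left ((hb r (Set.Icc_subset_Icc le_rfl ht.2 hr)).2)
        (knn r hr)
    rwa [intervalIntegral.integral_mul_const, kernel_integral H t hH ht0,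
      mul_comm] at this

lemma hatSigma_neg (H : ℝ) (σ : ℝ → ℝ) (t : ℝ) :
    hatSigma H (fun r => -σ r) t = - hatSigma H σ t := by
  simp [hatSigma, mul_neg, intervalIntegral.integral_neg]

lemma main_pos (H T : ℝ) (hH : H ∈ Set.Ioo (1/2 : ℝ) 1) (hT : 0 < T)
    (σ : ℝ → ℝ) (hσ : ContinuousOn σ (Set.Icc 0 T))
    (hpos : ∀ t ∈ Set.Icc (0:ℝ) T, 0 < σ t) :
    ∃ M : ℝ, 0 < M ∧ ∀ t ∈ Set.Icc (0:ℝ) T,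
      (1 / M) * t ^ (2 * H - 1) ≤ hatSigma H σ t / σ t ∧
        hatSigma H σ t / σ t ≤ M * t ^ (2 * H - 1) := by
  have hcpt : IsCompact (Set.Icc (0:ℝ) T) := isCompact_Icc
  have hne : (Set.Icc (0:ℝ) T).Nonempty := ⟨0, le_rfl, hT.le⟩
  obtain ⟨xm, hxm, hmin⟩ := hcpt.exists_isMinOn hne hσ
  obtain ⟨xM, hxM, hmax⟩ := hcpt.exists_isMaxOn hne hσ
  set a := σ xm with ha_def
  set b := σ xM with hb_def
  have ha : 0 < a := hpos xm hxm
  have hbpos : 0 < b := hpos xM hxM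
  have hHpos : 0 < H := by linarith [hH.1]
  have hab : ∀ r ∈ Set.Icc (0:ℝ) T, a ≤ σ r ∧ σ r ≤ b := fun r hr =>
    ⟨hmin hr, hmax hr⟩
  refine ⟨b / (a * H), by positivity, fun t ht => ?_⟩
  obtain ⟨hlow, hup⟩ := hatSigma_bounds H T hH σ hσ a b hab t ht
  have hσt := hpos t ht
  have habσ := hab t ht
  have htκ : (0:ℝ) ≤ t ^ (2 * H - 1) := Real.rpow_nonneg ht.1 _
  have hSnn : (0:ℝ) ≤ hatSigma H σ t := le_trans (by positivity) hlow
  constructor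
  · have h1 : (1 / (b / (a * H))) * t ^ (2 * H - 1) = a * (H * t ^ (2 * H - 1)) / b := by
      field_simp
    rw [h1]
    calc a * (H * t ^ (2 * H - 1)) / b ≤ hatSigma H σ t / b := by
          gcongr
      _ ≤ hatSigma H σ t / σ t := by
          gcongr
          exact habσ.2
  · have hH1 : H ≤ 1 := hH.2.le
    calc hatSigma H σ t / σ t ≤ hatSigma H σ t / a :=
          div_le_div_of_nonneg_left hSnn ha habσ.1
      _ ≤ b * (H * t ^ (2 * H - 1)) / a := by gcongr
      _ ≤ b / (a * H) * t ^ (2 * H - 1) := by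
          rw [div_mul_eq_mul_div, div_le_div_iff₀ ha (by positivity)]
          have : b * (H * t ^ (2 * H - 1)) * (a * H) = (a * b * t ^ (2 * H - 1)) * H ^ 2 := by
            ring
          rw [this]
          have h2 : (H:ℝ) ^ 2 ≤ 1 := by nlinarith
          calc (a * b * t ^ (2 * H - 1)) * H ^ 2 ≤ (a * b * t ^ (2 * H - 1)) * 1 := by
                apply mul_le_mul_of_nonneg_left h2 (by positivity)
            _ = b * t ^ (2 * H - 1) * a := by ring

/-- Two-sided bound: if `σ` is continuous and never vanishes on `[0,T]`, then
there is `M > 0` with `(1/M) t^{2H−1} ≤ σ̂(t)/σ(t) ≤ M t^{2H−1}` on `[0,T]`. -/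
theorem hatSigma_div_sigma_bounds
    (H T : ℝ) (hH : H ∈ Set.Ioo (1/2 : ℝ) 1) (hT : 0 < T)
    (σ : ℝ → ℝ) (hσ : ContinuousOn σ (Set.Icc 0 T))
    (hne : ∀ t ∈ Set.Icc (0:ℝ) T, σ t ≠ 0) :
    ∃ M : ℝ, 0 < M ∧ ∀ t ∈ Set.Icc (0:ℝ) T,
      (1 / M) * t ^ (2 * H - 1) ≤ hatSigma H σ t / σ t ∧
        hatSigma H σ t / σ t ≤ M * t ^ (2 * H - 1) := by
  have h0T : (0:ℝ) ∈ Set.Icc (0:ℝ) T := ⟨le_rfl, hT.le⟩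
  have hsign : (∀ t ∈ Set.Icc (0:ℝ) T, 0 < σ t) ∨ (∀ t ∈ Set.Icc (0:ℝ) T, σ t < 0) := by
    rcases lt_or_gt_of_ne (hne 0 h0T) with h0 | h0
    · right
      intro t ht
      by_contra hc
      push_neg at hc
      have hc' : 0 < σ t := lt_of_le_of_ne hc (Ne.symm (hne t ht))
      have hcont : ContinuousOn σ (Set.uIcc 0 t) := by
        apply hσ.mono
        rw [Set.uIcc_of_le ht.1]
        exact Set.Icc_subset_Icc le_rfl ht.2
      have := intermediate_value_uIcc hcont
      have h0mem : (0:ℝ) ∈ Set.uIcc (σ 0) (σ t) := Set.mem_uIcc.2 (Or.inl ⟨h0.le, hc'.le⟩)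
      obtain ⟨x, hx, hx0⟩ := this h0mem
      have hxT : x ∈ Set.Icc (0:ℝ) T := by
        rw [Set.uIcc_of_le ht.1] at hx
        exact ⟨hx.1, hx.2.trans ht.2⟩
      exact hne x hxT hx0
    · left
      intro t ht
      by_contra hc
      push_neg at hc
      have hc' : σ t < 0 := lt_of_le_of_ne hc (hne t ht)
      have hcont : ContinuousOn σ (Set.uIcc 0 t) := by
        apply hσ.mono
        rw [Set.uIcc_of_le ht.1]
        exact Set.Icc_subset_Icc le_rfl ht.2
      have := intermediate_value_uIcc hcont
      have h0mem : (0:ℝ) ∈ Set.uIcc (σ 0) (σ t) := Set.mem_uIcc.2 (Or.inr ⟨hc'.le, h0.le⟩)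
      obtain ⟨x, hx, hx0⟩ := this h0mem
      have hxT : x ∈ Set.Icc (0:ℝ) T := by
        rw [Set.uIcc_of_le ht.1] at hx
        exact ⟨hx.1, hx.2.trans ht.2⟩
      exact hne x hxT hx0
  rcases hsign with hpos | hneg
  · exact main_pos H T hH hT σ hσ hpos
  · obtain ⟨M, hM, hbd⟩ := main_pos H T hH hT (fun r => -σ r) (hσ.neg) fun t ht =>
      neg_pos.2 (hneg t ht)
    refine ⟨M, hM, fun t ht => ?_⟩
    have := hbd t ht
    rwa [hatSigma_neg, neg_div_neg_eq] at this
end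

section
/- (Backward Gronwall-type inequality.) Let T > 0 and let a, α, β : [0,T] → ℝ₊ be nonnegative Borel functions such that a is nonincreasing and α, β are integrable on [0,T]. Let x : [0,T] → ℝ₊ be a nonnegative continuous function satisfying x²(t) ≤ a(t) + 2∫ₜᵀ α(s) x(s) ds + 2∫ₜᵀ β(s) x²(s) ds for all t ∈ [0,T]. Then x(t) ≤ √(a(t)) · exp(∫ₜᵀ β(s) ds) + ∫ₜᵀ α(s) exp(∫ₜˢ β(r) dr) ds for all t ∈ [0,T]. -/
open MeasureTheory Set intervalIntegral Filter Topology

private lemma cont_upper {g : ℝ → ℝ} (hg : Integrable g) (R : ℝ) :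
    Continuous fun s => ∫ r in s..R, g r := by
  have h : ∀ s : ℝ, ∫ r in s..R, g r = (∫ r in (0:ℝ)..R, g r) - ∫ r in (0:ℝ)..s, g r := by
    intro s
    have := intervalIntegral.integral_add_adjacent_intervals
      (hg.intervalIntegrable (a := 0) (b := s)) (hg.intervalIntegrable (a := s) (b := R))
    linarith
  have : (fun s => ∫ r in s..R, g r)
      = fun s => (∫ r in (0:ℝ)..R, g r) - ∫ r in (0:ℝ)..s, g r := funext h
  rw [this]
  exact continuous_const.sub (intervalIntegral.continuous_primitive
    (fun a b => hg.intervalIntegrable) 0)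

private lemma anti_upper {g : ℝ → ℝ} (hg : Integrable g) (hg0 : ∀ s, 0 ≤ g s) (R : ℝ) :
    Antitone fun s => ∫ r in s..R, g r := by
  intro s₁ s₂ h
  have hadd := intervalIntegral.integral_add_adjacent_intervals
    (hg.intervalIntegrable (a := s₁) (b := s₂)) (hg.intervalIntegrable (a := s₂) (b := R))
  have hnn : 0 ≤ ∫ r in s₁..s₂, g r :=
    intervalIntegral.integral_nonneg h (fun u _ => hg0 u)
  dsimp only
  linarith

private lemma key_strong (g : ℝ → ℝ) (hg : Measurable g) (hg0 : ∀ s, 0 ≤ g s)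
    (hgi : Integrable g) (t R c : ℝ) (htR : t ≤ R)
    (hsupp : ∀ s, s ∉ Ioc t R → g s = 0)
    (φ : ℝ → ℝ) (hφ : Continuous φ) :
    ∫ s in t..R, g s * φ (c + ∫ r in s..R, g r)
      = ∫ w in c..(c + ∫ s in t..R, g s), φ w := by
  set F : ℝ → ℝ := fun s => c + ∫ r in s..R, g r with hFdef
  have hFc : Continuous F := continuous_const.add (cont_upper hgi R)
  have hFanti : Antitone F := fun s₁ s₂ h => by
    have := anti_upper hgi hg0 R h
    simp only [hFdef]
    linarith
  have hFR : F R = c := by simp [hFdef]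
  have hcFt : c ≤ F t := hFR ▸ hFanti htR
  set μ : Measure ℝ := volume.withDensity (fun s => ENNReal.ofReal (g s)) with hμdef
  have hμapp : ∀ A : Set ℝ, MeasurableSet A → μ A = ∫⁻ s in A, ENNReal.ofReal (g s) := by
    intro A hA
    rw [hμdef, withDensity_apply _ hA]
  have hμzero : ∀ A : Set ℝ, MeasurableSet A → (∀ s ∈ A, g s = 0) → μ A = 0 := by
    intro A hA h0
    rw [hμapp A hA]
    rw [setLIntegral_congr_fun hA (fun s hs => by
      rw [h0 s hs, ENNReal.ofReal_zero])]
    simp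
  have hμIoc : ∀ u : ℝ, t ≤ u → μ (Ioc u R) = ENNReal.ofReal (F u - c) := by
    intro u hu
    rw [hμapp _ measurableSet_Ioc]
    rw [← ofReal_integral_eq_lintegral_ofReal
      (hgi.integrableOn) (Filter.Eventually.of_forall hg0)]
    congr 1
    have : F u - c = ∫ r in u..R, g r := by simp [hFdef]
    rw [this]
    rcases le_or_gt u R with h | h
    · rw [intervalIntegral.integral_of_le h]
    · rw [intervalIntegral.integral_of_ge h.le]
      have h1 : Ioc u R = (∅ : Set ℝ) := Ioc_eq_empty (not_lt.mpr h.le)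
      have h2 : ∫ r in Ioc R u, g r = 0 :=
        setIntegral_eq_zero_of_forall_eq_zero (fun s hs =>
          hsupp s (fun hmem => absurd (hs.1.trans_le hmem.2) (lt_irrefl R)))
      rw [h1, h2]
      simp
  have hμfin : IsFiniteMeasure μ := by
    constructor
    rw [hμapp univ MeasurableSet.univ, setLIntegral_univ,
      ← ofReal_integral_eq_lintegral_ofReal hgi (Filter.Eventually.of_forall hg0)]
    exact ENNReal.ofReal_lt_top
  have hFmeas : Measurable F := hFc.measurable
  have hsplit : ∀ B : Set ℝ, μ B = μ (B ∩ Ioc t R) := by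
    intro B
    have h1 := measure_inter_add_diff (μ := μ) B (measurableSet_Ioc (a := t) (b := R))
    have h2 : μ (B \ Ioc t R) = 0 := by
      have hc : μ ((Ioc t R)ᶜ) = 0 :=
        hμzero _ measurableSet_Ioc.compl (fun s hs => hsupp s hs)
      exact measure_mono_null (fun x hx => hx.2) hc
    rw [← h1, h2, add_zero]
  have hmap : μ.map F = volume.restrict (Ioc c (F t)) := by
    haveI := hμfin
    haveI : IsFiniteMeasure (μ.map F) := by
      constructor
      rw [Measure.map_apply hFmeas MeasurableSet.univ]
      simp only [preimage_univ]
      exact measure_lt_top μ _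
    refine Measure.ext_of_Iic _ _ (fun b => ?_)
    rw [Measure.map_apply hFmeas measurableSet_Iic,
      Measure.restrict_apply measurableSet_Iic]
    have hrhs : Iic b ∩ Ioc c (F t) = Ioc c (min b (F t)) := by
      rw [inter_comm, Ioc_inter_Iic, min_comm]
    rw [hrhs, Real.volume_Ioc]
    rcases lt_or_ge b c with hbc | hbc
    · have hempty : F ⁻¹' Iic b ∩ Ioc t R = (∅ : Set ℝ) := by
        ext s
        simp only [mem_inter_iff, mem_preimage, mem_Iic, mem_Ioc, mem_empty_iff_false,
          iff_false, not_and]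
        intro h1 h2 h3
        have : c ≤ F s := hFR ▸ hFanti h3
        linarith
      rw [hsplit _, hempty, measure_empty, min_eq_left (hbc.le.trans hcFt)]
      symm
      rw [ENNReal.ofReal_eq_zero]
      linarith
    · set S : Set ℝ := Icc t R ∩ F ⁻¹' Iic b with hSdef
      have hSclosed : IsClosed S := isClosed_Icc.inter (isClosed_Iic.preimage hFc)
      have hRS : R ∈ S := ⟨⟨htR, le_refl R⟩, by simpa [mem_preimage, hFR] using hbc⟩
      have hSbdd : BddBelow S := ⟨t, fun y hy => hy.1.1⟩
      set σ := sInf S with hσdef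
      have hσS : σ ∈ S := hSclosed.csInf_mem ⟨R, hRS⟩ hSbdd
      have htσ : t ≤ σ := hσS.1.1
      have hσR : σ ≤ R := hσS.1.2
      have hFσb : F σ ≤ b := hσS.2
      have hsub1 : Ioc σ R ⊆ F ⁻¹' Iic b ∩ Ioc t R := fun s hs =>
        ⟨le_trans (hFanti hs.1.le) hFσb, ⟨lt_of_le_of_lt htσ hs.1, hs.2⟩⟩
      have hsub2 : F ⁻¹' Iic b ∩ Ioc t R ⊆ Icc σ R := fun s hs =>
        ⟨csInf_le hSbdd ⟨⟨hs.2.1.le, hs.2.2⟩, hs.1⟩, hs.2.2⟩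
      have hμσ : μ ({σ} : Set ℝ) = 0 :=
        (withDensity_absolutelyContinuous volume _) Real.volume_singleton
      have hIccIoc : μ (Icc σ R) = μ (Ioc σ R) := by
        have h1 : Icc σ R ⊆ {σ} ∪ Ioc σ R := by
          intro s hs
          rcases eq_or_lt_of_le hs.1 with h | h
          · exact Or.inl (by simp [← h])
          · exact Or.inr ⟨h, hs.2⟩
        refine le_antisymm ?_ (measure_mono Ioc_subset_Icc_self)
        calc μ (Icc σ R) ≤ μ ({σ} ∪ Ioc σ R) := measure_mono h1
          _ ≤ μ {σ} + μ (Ioc σ R) := measure_union_le _ _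
          _ = μ (Ioc σ R) := by rw [hμσ, zero_add]
      have hkey : μ (F ⁻¹' Iic b) = μ (Ioc σ R) := by
        rw [hsplit _]
        refine le_antisymm ?_ (measure_mono hsub1)
        calc μ (F ⁻¹' Iic b ∩ Ioc t R) ≤ μ (Icc σ R) := measure_mono hsub2
          _ = μ (Ioc σ R) := hIccIoc
      rw [hkey, hμIoc σ htσ]
      have hFσval : F σ = min b (F t) := by
        rcases eq_or_lt_of_le htσ with h | h
        · rw [← h] at hFσb ⊢
          rw [min_eq_right hFσb]
        · have hbFσ : b ≤ F σ := by
            have htd : Tendsto F (𝓝[<] σ) (𝓝 (F σ)) :=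
              (hFc.tendsto σ).mono_left nhdsWithin_le_nhds
            refine ge_of_tendsto htd ?_
            filter_upwards [Ioo_mem_nhdsLT h] with s hs
            by_contra hcon
            push_neg at hcon
            have hsS : s ∈ S := ⟨⟨hs.1.le, hs.2.le.trans hσR⟩, hcon.le⟩
            exact absurd (csInf_le hSbdd hsS) (not_le.mpr hs.2)
          have hFσ : F σ = b := le_antisymm hFσb hbFσ
          rw [hFσ, min_eq_left (hFσ ▸ hFanti htσ : b ≤ F t)]
      rw [hFσval]
  have hfin : ∫ w in c..(F t), φ w = ∫ s in t..R, g s * φ (F s) := by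
    rw [intervalIntegral.integral_of_le hcFt, ← hmap,
      integral_map hFmeas.aemeasurable hφ.aestronglyMeasurable, hμdef]
    have hd : (fun s => ENNReal.ofReal (g s))
        = fun s => (((g s).toNNReal : NNReal) : ENNReal) := rfl
    rw [hd, integral_withDensity_eq_integral_smul
      (f := fun s => (g s).toNNReal) (measurable_real_toNNReal.comp hg)]
    have hcong : ∀ s, (g s).toNNReal • φ (F s) = g s * φ (F s) := by
      intro s
      rw [NNReal.smul_def, Real.coe_toNNReal _ (hg0 s), smul_eq_mul]
    rw [integral_congr_ae (Filter.Eventually.of_forall hcong),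
      ← setIntegral_eq_integral_of_forall_compl_eq_zero
        (s := Ioc t R) (fun s hs => by rw [hsupp s hs, zero_mul]),
      intervalIntegral.integral_of_le htR]
  exact hfin.symm
private lemma key_ae (g : ℝ → ℝ) (t R c : ℝ) (htR : t ≤ R)
    (hg_meas : AEMeasurable g (volume.restrict (Ioc t R)))
    (hg0 : ∀ᵐ s ∂(volume.restrict (Ioc t R)), 0 ≤ g s)
    (hgi : IntegrableOn g (Ioc t R))
    (φ : ℝ → ℝ) (hφ : Continuous φ) :
    ∫ s in t..R, g s * φ (c + ∫ r in s..R, g r)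
      = ∫ w in c..(c + ∫ s in t..R, g s), φ w := by
  set g₀ : ℝ → ℝ := (Ioc t R).indicator (fun s => max (hg_meas.mk g s) 0) with hg₀def
  have hg₀meas : Measurable g₀ :=
    (hg_meas.measurable_mk.max measurable_const).indicator measurableSet_Ioc
  have hg₀0 : ∀ s, 0 ≤ g₀ s := fun s => by
    rw [hg₀def]
    by_cases h : s ∈ Ioc t R
    · rw [indicator_of_mem h]; exact le_max_right _ _
    · rw [indicator_of_notMem h]
  have hsupp : ∀ s, s ∉ Ioc t R → g₀ s = 0 := fun s h => indicator_of_notMem h _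
  have haeq : g =ᵐ[volume.restrict (Ioc t R)] g₀ := by
    filter_upwards [hg_meas.ae_eq_mk, hg0, ae_restrict_mem measurableSet_Ioc] with s h1 h2 h3
    rw [hg₀def, indicator_of_mem h3, ← h1, max_eq_left (h1 ▸ h2)]
  have hg₀i : Integrable g₀ := by
    have h1 : IntegrableOn g₀ (Ioc t R) := hgi.congr haeq
    have h2 : (Ioc t R).indicator g₀ = g₀ := by
      funext s
      by_cases h : s ∈ Ioc t R
      · rw [indicator_of_mem h]
      · rw [indicator_of_notMem h, hsupp s h]
    rw [← h2]
    exact h1.integrable_indicator measurableSet_Ioc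
  have haeq' : ∀ᵐ x ∂(volume : Measure ℝ), x ∈ Ioc t R → g x = g₀ x :=
    (ae_restrict_iff' measurableSet_Ioc).mp haeq
  have hFeq : ∀ s, t ≤ s → s ≤ R → (∫ r in s..R, g r) = ∫ r in s..R, g₀ r := by
    intro s h1 h2
    rw [intervalIntegral.integral_of_le h2, intervalIntegral.integral_of_le h2]
    refine setIntegral_congr_ae measurableSet_Ioc ?_
    filter_upwards [haeq'] with u hu humem
    exact hu (Ioc_subset_Ioc_left h1 humem)
  have hL : ∫ s in t..R, g s * φ (c + ∫ r in s..R, g r)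
      = ∫ s in t..R, g₀ s * φ (c + ∫ r in s..R, g₀ r) := by
    rw [intervalIntegral.integral_of_le htR, intervalIntegral.integral_of_le htR]
    refine setIntegral_congr_ae measurableSet_Ioc ?_
    filter_upwards [haeq'] with s h1
    intro hmem
    rw [h1 hmem, hFeq s hmem.1.le hmem.2]
  rw [hL, hFeq t (le_refl t) htR]
  exact key_strong g₀ hg₀meas hg₀0 hg₀i t R c htR hsupp φ hφ

private lemma fubini_tri (f g : ℝ → ℝ) (t R : ℝ)
    (hfi : IntegrableOn f (Ioc t R)) (hgi : IntegrableOn g (Ioc t R)) :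
    ∫ s in Ioc t R, f s * ∫ r in Ioc s R, g r
      = ∫ r in Ioc t R, g r * ∫ s in Ioc t r, f s := by
  set μ := volume.restrict (Ioc t R) with hμ
  set k : ℝ × ℝ → ℝ := fun p => if p.1 < p.2 then f p.1 * g p.2 else 0 with hk
  have hki : Integrable k (μ.prod μ) := by
    have h1 : Integrable (fun p : ℝ × ℝ => f p.1 * g p.2) (μ.prod μ) := hfi.mul_prod hgi
    have h2 : k = ({p : ℝ × ℝ | p.1 < p.2}).indicator (fun p => f p.1 * g p.2) := by
      funext p
      by_cases h : p.1 < p.2 <;> simp [hk, indicator, h]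
    rw [h2]
    exact h1.indicator (measurableSet_lt measurable_fst measurable_snd)
  have hswap := integral_integral_swap (f := fun s r => k (s, r)) hki
  have hL : ∀ᵐ s ∂μ, (∫ r, k (s, r) ∂μ) = f s * ∫ r in Ioc s R, g r := by
    filter_upwards [ae_restrict_mem measurableSet_Ioc] with s hs
    have h1 : (fun r => k (s, r)) = fun r => (Ioi s).indicator (fun r => f s * g r) r := by
      funext r
      by_cases h : s < r <;> simp [hk, indicator, h, mem_Ioi]
    have h2 : Ioi s ∩ Ioc t R = Ioc s R := by
      ext r
      simp only [mem_inter_iff, mem_Ioi, mem_Ioc]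
      constructor
      · rintro ⟨a, b, c⟩; exact ⟨a, c⟩
      · rintro ⟨a, b⟩; exact ⟨a, hs.1.trans a, b⟩
    rw [h1, hμ, MeasureTheory.integral_indicator measurableSet_Ioi, Measure.restrict_restrict measurableSet_Ioi,
      h2, MeasureTheory.integral_const_mul]
  have hR : ∀ᵐ r ∂μ, (∫ s, k (s, r) ∂μ) = g r * ∫ s in Ioc t r, f s := by
    filter_upwards [ae_restrict_mem measurableSet_Ioc] with r hr
    have h1 : (fun s => k (s, r)) = fun s => (Iio r).indicator (fun s => f s * g r) s := by
      funext s
      by_cases h : s < r <;> simp [hk, indicator, h, mem_Iio]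
    have h2 : Iio r ∩ Ioc t R = Ioo t r := by
      ext s
      simp only [mem_inter_iff, mem_Iio, mem_Ioc, mem_Ioo]
      constructor
      · rintro ⟨a, b, c⟩; exact ⟨b, a⟩
      · rintro ⟨a, b⟩; exact ⟨b, a, (b.trans_le hr.2).le⟩
    rw [h1, hμ, MeasureTheory.integral_indicator measurableSet_Iio, Measure.restrict_restrict measurableSet_Iio,
      h2, ← integral_Ioc_eq_integral_Ioo, MeasureTheory.integral_mul_const, mul_comm]
  calc ∫ s in Ioc t R, f s * ∫ r in Ioc s R, g r
      = ∫ s, (∫ r, k (s, r) ∂μ) ∂μ := (integral_congr_ae hL).symm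
    _ = ∫ r, (∫ s, k (s, r) ∂μ) ∂μ := hswap
    _ = ∫ r in Ioc t R, g r * ∫ s in Ioc t r, f s := integral_congr_ae hR

private lemma int_mul_bdd {g f : ℝ → ℝ} (hgi : Integrable g)
    (hf : AEStronglyMeasurable f (volume : Measure ℝ)) (hb : ∃ C, ∀ s, |f s| ≤ C) :
    Integrable (fun s => g s * f s) := by
  have h := hgi.bdd_mul hf (c := hb.choose) (Filter.Eventually.of_forall (fun s => by simpa [Real.norm_eq_abs] using hb.choose_spec s))
  simpa [mul_comm] using h

private theorem aux_gronwall (T : ℝ) (hT : 0 < T) (a α β x : ℝ → ℝ)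
    (hα_meas : Measurable α) (hβ_meas : Measurable β)
    (ha_nonneg : ∀ t ∈ Icc (0:ℝ) T, 0 ≤ a t)
    (hα0 : ∀ s, 0 ≤ α s) (hβ0 : ∀ s, 0 ≤ β s)
    (ha_anti : AntitoneOn a (Icc 0 T))
    (hαi : Integrable α) (hβi : Integrable β)
    (hxc : Continuous x) (hx0 : ∀ s, 0 ≤ x s)
    (hxb : ∃ C, ∀ s, |x s| ≤ C)
    (hineq : ∀ t ∈ Icc (0:ℝ) T,
      x t ^ 2 ≤ a t + 2 * (∫ s in t..T, α s * x s) + 2 * ∫ s in t..T, β s * x s ^ 2) :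
    ∀ t ∈ Icc (0:ℝ) T,
      x t ≤ Real.sqrt (a t) * Real.exp (∫ s in t..T, β s)
        + ∫ s in t..T, α s * Real.exp (∫ r in t..s, β r) := by
  intro t₀ ht₀
  obtain ⟨Cx, hCx⟩ := hxb
  have hCx0 : 0 ≤ Cx := (abs_nonneg _).trans (hCx 0)
  -- global objects
  set Bf : ℝ → ℝ := fun s => ∫ r in s..T, β r with hBfdef
  have hBfc : Continuous Bf := cont_upper hβi T
  set P : ℝ → ℝ := fun s => Real.exp (Bf s) with hPdef
  have hPc : Continuous P := Real.continuous_exp.comp hBfc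
  have hPpos : ∀ s, 0 < P s := fun s => Real.exp_pos _
  set Cβ : ℝ := ∫ r, |β r| with hCβdef
  have hBfbdd : ∀ s, |Bf s| ≤ Cβ := by
    intro s
    calc |Bf s| = ‖∫ r in s..T, β r‖ := (Real.norm_eq_abs _).symm
      _ ≤ ∫ r in Set.uIoc s T, ‖β r‖ := intervalIntegral.norm_integral_le_integral_norm_uIoc
      _ ≤ ∫ r, ‖β r‖ := by
          refine integral_mono_measure Measure.restrict_le_self ?_ ?_
          · exact Filter.Eventually.of_forall (fun r => norm_nonneg _)
          · exact hβi.norm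
      _ = Cβ := by simp [hCβdef, Real.norm_eq_abs]
  have hPbdd : ∀ s, |P s| ≤ Real.exp Cβ := by
    intro s
    rw [abs_of_pos (hPpos s)]
    exact Real.exp_le_exp.mpr ((le_abs_self _).trans (hBfbdd s))
  have hPinvbdd : ∀ s, |(P s)⁻¹| ≤ Real.exp Cβ := by
    intro s
    rw [abs_of_pos (inv_pos.mpr (hPpos s)), hPdef, ← Real.exp_neg]
    exact Real.exp_le_exp.mpr ((neg_le_abs _).trans (hBfbdd s))
  -- integrability
  have hαx : Integrable (fun s => α s * x s) :=
    int_mul_bdd hαi hxc.aestronglyMeasurable ⟨Cx, hCx⟩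
  have hβx : Integrable (fun s => β s * x s) :=
    int_mul_bdd hβi hxc.aestronglyMeasurable ⟨Cx, hCx⟩
  have hβx2 : Integrable (fun s => β s * x s ^ 2) := by
    refine int_mul_bdd hβi (hxc.pow 2).aestronglyMeasurable ⟨Cx ^ 2, fun s => ?_⟩
    rw [abs_pow]
    exact pow_le_pow_left₀ (abs_nonneg _) (hCx s) 2
  have hαP : Integrable (fun s => α s / P s) := by
    have h := int_mul_bdd hαi (hPc.inv₀ (fun s => (hPpos s).ne')).aestronglyMeasurable
      ⟨Real.exp Cβ, hPinvbdd⟩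
    simpa [div_eq_mul_inv] using h
  have hβP : Integrable (fun s => β s * P s) :=
    int_mul_bdd hβi hPc.aestronglyMeasurable ⟨Real.exp Cβ, hPbdd⟩
  set A : ℝ := a t₀ with hAdef
  have hA0 : 0 ≤ A := ha_nonneg t₀ ht₀
  set K : ℝ := ∫ s in t₀..T, α s * Real.exp (∫ r in t₀..s, β r) with hKdef
  have hmain : ∀ ε > (0:ℝ), x t₀ ≤ Real.sqrt (A + ε) * P t₀ + K := by
    intro ε hε
    set g : ℝ → ℝ := fun s => 2 * (α s * x s + β s * x s ^ 2) with hgdef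
    have hgmeas : Measurable g :=
      (((hα_meas.mul hxc.measurable).add (hβ_meas.mul (hxc.pow 2).measurable)).const_mul 2)
    have hg0 : ∀ s, 0 ≤ g s := fun s => by
      have h1 : 0 ≤ α s * x s := mul_nonneg (hα0 s) (hx0 s)
      have h2 : 0 ≤ β s * x s ^ 2 := mul_nonneg (hβ0 s) (sq_nonneg _)
      simp only [hgdef]
      linarith
    have hgi : Integrable g := (hαx.add hβx2).const_mul 2
    set u : ℝ → ℝ := fun s => A + ε + ∫ r in s..T, g r with hudef
    have huc : Continuous u := continuous_const.add (cont_upper hgi T)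
    have hu_ge : ∀ s, s ≤ T → A + ε ≤ u s := fun s hs => by
      have h : 0 ≤ ∫ r in s..T, g r := intervalIntegral.integral_nonneg hs (fun r _ => hg0 r)
      simp only [hudef]
      linarith
    have hAεhalf : ε / 2 < A + ε := by linarith
    have hxu : ∀ s ∈ Icc t₀ T, x s ≤ Real.sqrt (u s) := by
      intro s hs
      have hs0T : s ∈ Icc (0:ℝ) T := ⟨ht₀.1.trans hs.1, hs.2⟩
      have h1 : x s ^ 2 ≤ u s := by
        have h2 := hineq s hs0T
        have h3 : a s ≤ A := ha_anti ht₀ hs0T hs.1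
        have h4 : (∫ r in s..T, g r)
            = 2 * (∫ r in s..T, α r * x r) + 2 * ∫ r in s..T, β r * x r ^ 2 := by
          calc ∫ r in s..T, g r
              = ∫ r in s..T, (2 * (α r * x r) + 2 * (β r * x r ^ 2)) :=
                intervalIntegral.integral_congr (fun r _ => by simp only [hgdef]; ring)
            _ = (∫ r in s..T, 2 * (α r * x r)) + ∫ r in s..T, 2 * (β r * x r ^ 2) :=
                intervalIntegral.integral_add (hαx.const_mul 2).intervalIntegrable
                  (hβx2.const_mul 2).intervalIntegrable
            _ = 2 * (∫ r in s..T, α r * x r) + 2 * ∫ r in s..T, β r * x r ^ 2 := by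
                rw [intervalIntegral.integral_const_mul, intervalIntegral.integral_const_mul]
        simp only [hudef]
        rw [h4]
        linarith
      calc x s = Real.sqrt (x s ^ 2) := (Real.sqrt_sq (hx0 s)).symm
        _ ≤ Real.sqrt (u s) := Real.sqrt_le_sqrt h1
    set φ : ℝ → ℝ := fun w => (Real.sqrt (max w (ε/2)))⁻¹ with hφdef
    have hφc : Continuous φ := by
      refine (Real.continuous_sqrt.comp (continuous_id.max continuous_const)).inv₀ ?_
      intro w
      refine (Real.sqrt_pos.mpr ?_).ne'
      exact lt_of_lt_of_le (by linarith) (le_max_right _ _)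
    have hφbdd : ∀ w, |φ w| ≤ (Real.sqrt (ε/2))⁻¹ := by
      intro w
      have h1 : 0 < Real.sqrt (ε/2) := Real.sqrt_pos.mpr (by linarith)
      have h2 : Real.sqrt (ε/2) ≤ Real.sqrt (max w (ε/2)) :=
        Real.sqrt_le_sqrt (le_max_right _ _)
      rw [hφdef, abs_of_pos (inv_pos.mpr (lt_of_lt_of_le h1 h2))]
      exact inv_anti₀ h1 h2
    have hstepA : ∀ t ∈ Icc t₀ T,
        x t ≤ Real.sqrt (A + ε) + (∫ s in t..T, α s) + ∫ s in t..T, β s * x s := by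
      intro t ht
      have htT : t ≤ T := ht.2
      have hkey := key_ae g t T (A + ε) htT hgmeas.aemeasurable
        (Filter.Eventually.of_forall hg0) hgi.integrableOn φ hφc
      have hut : A + ε + (∫ s in t..T, g s) = u t := rfl
      have hAεut : A + ε ≤ u t := hu_ge t htT
      have hrhs : (∫ w in (A+ε)..(A + ε + ∫ s in t..T, g s), φ w)
          = 2 * Real.sqrt (u t) - 2 * Real.sqrt (A + ε) := by
        rw [hut]
        have hftc : ∀ w ∈ uIcc (A+ε) (u t),
            HasDerivAt (fun y => 2 * Real.sqrt (max y (ε/2))) (φ w) w := by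
          intro w hw
          rw [uIcc_of_le hAεut] at hw
          have hw2 : ε/2 < w := lt_of_lt_of_le hAεhalf hw.1
          have hw0 : 0 < w := lt_of_le_of_lt (by linarith) hw2
          have h1 : HasDerivAt Real.sqrt (1 / (2 * Real.sqrt w)) w :=
            Real.hasDerivAt_sqrt hw0.ne'
          have hsw : Real.sqrt w ≠ 0 := (Real.sqrt_pos.mpr hw0).ne'
          have h2 : HasDerivAt (fun y => 2 * Real.sqrt y) ((Real.sqrt w)⁻¹) w := by
            have h := h1.const_mul 2
            rw [show (Real.sqrt w)⁻¹ = 2 * (1 / (2 * Real.sqrt w)) by ring]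
            exact h
          have h3 : (fun y => 2 * Real.sqrt y) =ᶠ[nhds w]
              (fun y => 2 * Real.sqrt (max y (ε/2))) := by
            filter_upwards [isOpen_Ioi.mem_nhds (show w ∈ Ioi (ε/2) from hw2)] with y hy
            rw [max_eq_left (le_of_lt hy)]
          have h4 := h2.congr_of_eventuallyEq h3.symm
          have h5 : φ w = (Real.sqrt w)⁻¹ := by
            rw [hφdef]
            simp only [max_eq_left hw2.le]
          rw [h5]
          exact h4
        rw [intervalIntegral.integral_eq_sub_of_hasDerivAt hftc
          (hφc.intervalIntegrable _ _)]
        rw [max_eq_left (lt_of_lt_of_le hAεhalf hAεut).le, max_eq_left hAεhalf.le]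
      have hlhs : (∫ s in t..T, g s * φ (A + ε + ∫ r in s..T, g r))
          ≤ ∫ s in t..T, 2 * (α s + β s * x s) := by
        have hcong : (fun s => g s * φ (A + ε + ∫ r in s..T, g r))
            = fun s => g s * φ (u s) := rfl
        rw [hcong]
        have hint1 : IntervalIntegrable (fun s => g s * φ (u s)) volume t T :=
          (int_mul_bdd hgi ((hφc.comp huc).aestronglyMeasurable)
            ⟨(Real.sqrt (ε/2))⁻¹, fun s => hφbdd (u s)⟩).intervalIntegrable
        have hint2 : IntervalIntegrable (fun s => 2 * (α s + β s * x s)) volume t T :=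
          ((hαi.add hβx).const_mul 2).intervalIntegrable
        refine intervalIntegral.integral_mono_on htT hint1 hint2 ?_
        intro s hs
        have hsIcc : s ∈ Icc t₀ T := ⟨ht.1.trans hs.1, hs.2⟩
        have hsu : x s ≤ Real.sqrt (u s) := hxu s hsIcc
        have husT : A + ε ≤ u s := hu_ge s hs.2
        have hmax : max (u s) (ε/2) = u s := max_eq_left (lt_of_lt_of_le hAεhalf husT).le
        have hsqpos : 0 < Real.sqrt (u s) :=
          Real.sqrt_pos.mpr (lt_of_lt_of_le (by linarith) husT)
        have h9 : 0 ≤ 2 * (α s + β s * x s) := by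
          have := hα0 s
          have := hβ0 s
          have := hx0 s
          positivity
        have h7 : g s = 2 * (α s + β s * x s) * x s := by
          simp only [hgdef]
          ring
        have h8 : g s / Real.sqrt (u s) ≤ 2 * (α s + β s * x s) := by
          rw [div_le_iff₀ hsqpos, h7]
          exact mul_le_mul_of_nonneg_left hsu h9
        calc g s * φ (u s) = g s / Real.sqrt (u s) := by
              rw [hφdef]
              simp only [hmax]
              rw [div_eq_mul_inv]
          _ ≤ 2 * (α s + β s * x s) := h8
      have h10 : (∫ s in t..T, 2 * (α s + β s * x s))
          = 2 * (∫ s in t..T, α s) + 2 * (∫ s in t..T, β s * x s) := by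
        rw [intervalIntegral.integral_const_mul,
          intervalIntegral.integral_add hαi.intervalIntegrable hβx.intervalIntegrable]
        ring
      have h11 : 2 * Real.sqrt (u t) - 2 * Real.sqrt (A + ε)
          ≤ 2 * (∫ s in t..T, α s) + 2 * (∫ s in t..T, β s * x s) := by
        rw [← h10, ← hrhs, ← hkey]
        exact hlhs
      have hxut : x t ≤ Real.sqrt (u t) := hxu t ht
      linarith
    -- Step B: the comparison function W and its integral equation
    set C : ℝ := Real.sqrt (A + ε) with hCdef
    have hC0 : 0 ≤ C := Real.sqrt_nonneg _
    set Q : ℝ → ℝ := fun s => ∫ r in s..T, α r / P r with hQdef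
    have hQc : Continuous Q := cont_upper hαP T
    have hQbdd : ∀ s, |Q s| ≤ ∫ r, |α r / P r| := by
      intro s
      calc |Q s| = ‖∫ r in s..T, α r / P r‖ := (Real.norm_eq_abs _).symm
        _ ≤ ∫ r in Set.uIoc s T, ‖α r / P r‖ := intervalIntegral.norm_integral_le_integral_norm_uIoc
        _ ≤ ∫ r, ‖α r / P r‖ := integral_mono_measure Measure.restrict_le_self
            (Filter.Eventually.of_forall fun r => norm_nonneg _) hαP.norm
        _ = ∫ r, |α r / P r| := by simp only [Real.norm_eq_abs]
    have hQ0 : ∀ s, s ≤ T → 0 ≤ Q s := fun s hs =>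
      intervalIntegral.integral_nonneg hs (fun r _ => div_nonneg (hα0 r) (hPpos r).le)
    set W : ℝ → ℝ := fun s => C * P s + P s * Q s with hWdef
    have hWc : Continuous W := (continuous_const.mul hPc).add (hPc.mul hQc)
    have hW0 : ∀ s, s ≤ T → 0 ≤ W s := fun s hs => by
      have h1 := hPpos s
      have h2 := hQ0 s hs
      simp only [hWdef]
      positivity
    have hβPQ : Integrable (fun s => β s * P s * Q s) :=
      int_mul_bdd hβP hQc.aestronglyMeasurable ⟨_, hQbdd⟩
    have hβW : Integrable (fun s => β s * W s) := by
      refine Integrable.congr ((hβP.const_mul C).add hβPQ)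
        (Filter.Eventually.of_forall fun s => ?_)
      simp only [Pi.add_apply, hWdef]
      ring
    have hB1 : ∀ t, t ≤ T → (∫ s in t..T, β s * P s) = P t - 1 := by
      intro t htT
      have hkey := key_ae β t T 0 htT hβ_meas.aemeasurable
        (Filter.Eventually.of_forall hβ0) hβi.integrableOn Real.exp Real.continuous_exp
      have h1 : (∫ s in t..T, β s * Real.exp (0 + ∫ r in s..T, β r))
          = ∫ s in t..T, β s * P s :=
        intervalIntegral.integral_congr (fun s _ => by rw [zero_add])
      rw [← h1, hkey, zero_add, integral_exp]
      simp [hPdef, hBfdef]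
    have hB2 : ∀ t r, t ≤ r → (∫ s in t..r, β s * P s) = P t - P r := by
      intro t r htr
      have hkey := key_ae β t r (Bf r) htr hβ_meas.aemeasurable
        (Filter.Eventually.of_forall hβ0) hβi.integrableOn Real.exp Real.continuous_exp
      have hadd : ∀ s : ℝ, (∫ r' in s..r, β r') + (∫ r' in r..T, β r') = ∫ r' in s..T, β r' :=
        fun s => intervalIntegral.integral_add_adjacent_intervals
          hβi.intervalIntegrable hβi.intervalIntegrable
      have h1 : (∫ s in t..r, β s * Real.exp (Bf r + ∫ r' in s..r, β r'))
          = ∫ s in t..r, β s * P s := by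
        refine intervalIntegral.integral_congr (fun s _ => ?_)
        have h2 : Bf r + (∫ r' in s..r, β r') = Bf s := by
          have := hadd s
          simp only [hBfdef]
          linarith
        rw [h2]
      have h3 : Bf r + (∫ s in t..r, β s) = Bf t := by
        have := hadd t
        simp only [hBfdef]
        linarith
      rw [← h1, hkey, h3, integral_exp]
    have hB3 : ∀ t, t ≤ T →
        (∫ s in t..T, β s * P s * Q s) = P t * Q t - ∫ s in t..T, α s := by
      intro t htT
      have hfub := fubini_tri (fun s => β s * P s) (fun r => α r / P r) t T
        hβP.integrableOn hαP.integrableOn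
      rw [intervalIntegral.integral_of_le htT]
      have h1 : (∫ s in Ioc t T, β s * P s * Q s)
          = ∫ s in Ioc t T, (fun s => β s * P s) s * ∫ r in Ioc s T, α r / P r := by
        refine setIntegral_congr_fun measurableSet_Ioc (fun s hs => ?_)
        simp only [hQdef]
        rw [intervalIntegral.integral_of_le hs.2]
      rw [h1, hfub]
      have h2 : (∫ r in Ioc t T, (α r / P r) * ∫ s in Ioc t r, (fun s => β s * P s) s)
          = ∫ r in Ioc t T, (P t * (α r / P r) - α r) := by
        refine setIntegral_congr_fun measurableSet_Ioc (fun r hr => ?_)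
        have h3 : (∫ s in Ioc t r, β s * P s) = P t - P r := by
          rw [← intervalIntegral.integral_of_le hr.1.le]
          exact hB2 t r hr.1.le
        simp only []
        rw [h3]
        have h4 : P r ≠ 0 := (hPpos r).ne'
        field_simp
      rw [h2, integral_sub ((hαP.integrableOn).const_mul (P t)) hαi.integrableOn,
        MeasureTheory.integral_const_mul, ← intervalIntegral.integral_of_le htT,
        ← intervalIntegral.integral_of_le htT]
    have hWeq : ∀ t, t ≤ T →
        W t = C + (∫ s in t..T, α s) + ∫ s in t..T, β s * W s := by
      intro t htT
      have h2 : (∫ s in t..T, β s * W s)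
          = ∫ s in t..T, (C * (β s * P s) + β s * P s * Q s) :=
        intervalIntegral.integral_congr (fun s _ => by simp only [hWdef]; ring)
      have h1 : (∫ s in t..T, β s * W s)
          = C * (P t - 1) + (P t * Q t - ∫ s in t..T, α s) := by
        rw [h2, intervalIntegral.integral_add (hβP.const_mul C).intervalIntegrable
          hβPQ.intervalIntegrable, intervalIntegral.integral_const_mul,
          hB1 t htT, hB3 t htT]
      rw [h1]
      simp only [hWdef]
      ring
    -- Step C: iteration
    have hd : ∀ t ∈ Icc t₀ T, x t - W t ≤ ∫ s in t..T, (β s * x s - β s * W s) := by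
      intro t ht
      have h1 := hstepA t ht
      have h2 := hWeq t ht.2
      have h3 : (∫ s in t..T, (β s * x s - β s * W s))
          = (∫ s in t..T, β s * x s) - ∫ s in t..T, β s * W s :=
        intervalIntegral.integral_sub hβx.intervalIntegrable hβW.intervalIntegrable
      rw [h3]
      linarith
    have hclaim : ∀ n : ℕ, ∀ t ∈ Icc t₀ T,
        x t - W t ≤ Cx * (Bf t) ^ n / (n.factorial : ℝ) := by
      intro n
      induction n with
      | zero =>
        intro t ht
        simp only [pow_zero, Nat.factorial_zero, Nat.cast_one, mul_one, div_one]
        have h1 := hW0 t ht.2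
        have h2 := (le_abs_self (x t)).trans (hCx t)
        linarith
      | succ n ih =>
        intro t ht
        have h1 := hd t ht
        have hfact0 : (0:ℝ) < (n.factorial : ℝ) := by
          exact_mod_cast Nat.factorial_pos n
        have hcontr : Continuous fun s => Cx * Bf s ^ n / (n.factorial : ℝ) :=
          (continuous_const.mul (hBfc.pow n)).div_const _
        have hbnd : ∀ s, |Cx * Bf s ^ n / (n.factorial : ℝ)|
            ≤ Cx * Cβ ^ n / (n.factorial : ℝ) := by
          intro s
          rw [abs_div, abs_mul, abs_pow, abs_of_nonneg hCx0,
            abs_of_nonneg hfact0.le]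
          gcongr
          exact hBfbdd s
        have hintr : IntervalIntegrable
            (fun s => β s * (Cx * Bf s ^ n / (n.factorial : ℝ))) volume t T :=
          (int_mul_bdd hβi hcontr.aestronglyMeasurable ⟨_, hbnd⟩).intervalIntegrable
        have h2 : (∫ s in t..T, (β s * x s - β s * W s))
            ≤ ∫ s in t..T, β s * (Cx * Bf s ^ n / (n.factorial : ℝ)) := by
          refine intervalIntegral.integral_mono_on ht.2
            (hβx.intervalIntegrable.sub hβW.intervalIntegrable) hintr ?_
          intro s hs
          have h4 := ih s ⟨ht.1.trans hs.1, hs.2⟩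
          have h5 : β s * x s - β s * W s = β s * (x s - W s) := by ring
          rw [h5]
          exact mul_le_mul_of_nonneg_left h4 (hβ0 s)
        have h6 : (∫ s in t..T, β s * (Cx * Bf s ^ n / (n.factorial : ℝ)))
            = Cx * Bf t ^ (n + 1) / ((n + 1).factorial : ℝ) := by
          have hφ2c : Continuous fun w : ℝ => Cx * w ^ n / (n.factorial : ℝ) :=
            (continuous_const.mul (continuous_pow n)).div_const _
          have hkey := key_ae β t T 0 ht.2 hβ_meas.aemeasurable
            (Filter.Eventually.of_forall hβ0) hβi.integrableOn
            (fun w => Cx * w ^ n / (n.factorial : ℝ)) hφ2c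
          have h7 : (∫ s in t..T, β s * (Cx * (0 + ∫ r in s..T, β r) ^ n / (n.factorial : ℝ)))
              = ∫ s in t..T, β s * (Cx * Bf s ^ n / (n.factorial : ℝ)) :=
            intervalIntegral.integral_congr (fun s _ => by rw [zero_add])
          rw [← h7, hkey, zero_add]
          have h8 : (∫ w in (0:ℝ)..Bf t, Cx * w ^ n / (n.factorial : ℝ))
              = (Cx / (n.factorial : ℝ)) * ∫ w in (0:ℝ)..Bf t, w ^ n := by
            rw [← intervalIntegral.integral_const_mul]
            exact intervalIntegral.integral_congr (fun w _ => by ring)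
          rw [h8, integral_pow]
          have h9 : ((n + 1).factorial : ℝ) = (n.factorial : ℝ) * ((n : ℝ) + 1) := by
            rw [Nat.factorial_succ]
            push_cast
            ring
          rw [h9]
          have h10 : ((n : ℝ) + 1) ≠ 0 := by positivity
          field_simp
          simp
        calc x t - W t ≤ _ := h1
          _ ≤ _ := h2
          _ = _ := h6
    have ht₀mem : t₀ ∈ Icc t₀ T := ⟨le_refl t₀, ht₀.2⟩
    have hlim : Filter.Tendsto (fun n : ℕ => Cx * Bf t₀ ^ n / (n.factorial : ℝ))
        Filter.atTop (nhds 0) := by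
      have h := FloorSemiring.tendsto_pow_div_factorial_atTop (K := ℝ) (Bf t₀)
      have h2 := h.const_mul Cx
      rw [mul_zero] at h2
      refine h2.congr (fun n => ?_)
      rw [mul_div_assoc]
    have hxW : x t₀ - W t₀ ≤ 0 :=
      ge_of_tendsto hlim (Filter.Eventually.of_forall (fun n => hclaim n t₀ ht₀mem))
    have hPQ : P t₀ * Q t₀ = K := by
      have hQt : Q t₀ = ∫ r in t₀..T, α r / P r := rfl
      rw [hQt, hKdef, ← intervalIntegral.integral_const_mul]
      refine intervalIntegral.integral_congr (fun s _ => ?_)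
      have hadd : (∫ r in t₀..s, β r) + (∫ r in s..T, β r) = ∫ r in t₀..T, β r :=
        intervalIntegral.integral_add_adjacent_intervals
          hβi.intervalIntegrable hβi.intervalIntegrable
      have h1 : (∫ r in t₀..s, β r) = Bf t₀ - Bf s := by
        simp only [hBfdef]
        linarith
      rw [h1, hPdef]
      simp only []
      rw [Real.exp_sub]
      have h2 : Real.exp (Bf s) ≠ 0 := Real.exp_ne_zero _
      field_simp
    have hWt₀ : W t₀ = C * P t₀ + P t₀ * Q t₀ := rfl
    rw [hWt₀, hPQ] at hxW
    linarith
  -- Step E : ε → 0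
  have hlim2 : Filter.Tendsto (fun ε : ℝ => Real.sqrt (A + ε) * P t₀ + K)
      (nhdsWithin 0 (Ioi 0)) (nhds (Real.sqrt A * P t₀ + K)) := by
    have hcont : Continuous fun ε : ℝ => Real.sqrt (A + ε) * P t₀ + K :=
      ((Real.continuous_sqrt.comp (continuous_const.add continuous_id)).mul
        continuous_const).add continuous_const
    have h := hcont.tendsto 0
    simp only [add_zero] at h
    exact h.mono_left nhdsWithin_le_nhds
  have hfinal : x t₀ ≤ Real.sqrt A * P t₀ + K := by
    refine ge_of_tendsto hlim2 ?_
    filter_upwards [self_mem_nhdsWithin] with ε hε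
    exact hmain ε hε
  exact hfinal
/-- Backward Gronwall-type inequality: if `x ≥ 0` is continuous on `[0,T]` and
`x²(t) ≤ a(t) + 2∫ₜᵀ α x + 2∫ₜᵀ β x²` with `a` nonincreasing and `α, β ≥ 0`
integrable, then `x(t) ≤ √(a(t)) exp(∫ₜᵀ β) + ∫ₜᵀ α(s) exp(∫ₜˢ β) ds`. -/
theorem backward_gronwall
    (T : ℝ) (hT : 0 < T) (a α β x : ℝ → ℝ)
    (ha_meas : Measurable a) (hα_meas : Measurable α) (hβ_meas : Measurable β)
    (ha_nonneg : ∀ t ∈ Set.Icc (0:ℝ) T, 0 ≤ a t)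
    (hα_nonneg : ∀ t ∈ Set.Icc (0:ℝ) T, 0 ≤ α t)
    (hβ_nonneg : ∀ t ∈ Set.Icc (0:ℝ) T, 0 ≤ β t)
    (ha_anti : AntitoneOn a (Set.Icc 0 T))
    (hα_int : IntegrableOn α (Set.Icc 0 T))
    (hβ_int : IntegrableOn β (Set.Icc 0 T))
    (hx_cont : ContinuousOn x (Set.Icc 0 T))
    (hx_nonneg : ∀ t ∈ Set.Icc (0:ℝ) T, 0 ≤ x t)
    (hineq : ∀ t ∈ Set.Icc (0:ℝ) T,
      x t ^ 2 ≤ a t + 2 * (∫ s in t..T, α s * x s) + 2 * ∫ s in t..T, β s * x s ^ 2) :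
    ∀ t ∈ Set.Icc (0:ℝ) T,
      x t ≤ Real.sqrt (a t) * Real.exp (∫ s in t..T, β s)
        + ∫ s in t..T, α s * Real.exp (∫ r in t..s, β r) := by
  -- normalize data to globally defined functions
  have hproj : ∀ s : ℝ, max 0 (min s T) ∈ Icc (0:ℝ) T :=
    fun s => ⟨le_max_left _ _, max_le hT.le (min_le_right s T)⟩
  set x' : ℝ → ℝ := fun s => x (max 0 (min s T)) with hx'def
  have hx'c : Continuous x' :=
    hx_cont.comp_continuous (continuous_const.max (continuous_id.min continuous_const)) hproj
  have hx'eq : ∀ s ∈ Icc (0:ℝ) T, x' s = x s := by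
    intro s hs
    have h : max 0 (min s T) = s := by
      rw [min_eq_left hs.2, max_eq_right hs.1]
    simp only [hx'def, h]
  have hx'0 : ∀ s, 0 ≤ x' s := fun s => hx_nonneg _ (hproj s)
  have hx'b : ∃ Cb, ∀ s, |x' s| ≤ Cb := by
    obtain ⟨Cb, hCb⟩ := isCompact_Icc.exists_bound_of_continuousOn hx_cont
    exact ⟨Cb, fun s => by simpa [Real.norm_eq_abs] using hCb _ (hproj s)⟩
  set α' : ℝ → ℝ := (Icc (0:ℝ) T).indicator α with hα'def
  set β' : ℝ → ℝ := (Icc (0:ℝ) T).indicator β with hβ'def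
  have hα'meas : Measurable α' := hα_meas.indicator measurableSet_Icc
  have hβ'meas : Measurable β' := hβ_meas.indicator measurableSet_Icc
  have hα'0 : ∀ s, 0 ≤ α' s := fun s => by
    by_cases h : s ∈ Icc (0:ℝ) T
    · rw [hα'def, indicator_of_mem h]
      exact hα_nonneg s h
    · rw [hα'def, indicator_of_notMem h]
  have hβ'0 : ∀ s, 0 ≤ β' s := fun s => by
    by_cases h : s ∈ Icc (0:ℝ) T
    · rw [hβ'def, indicator_of_mem h]
      exact hβ_nonneg s h
    · rw [hβ'def, indicator_of_notMem h]
  have hα'i : Integrable α' := hα_int.integrable_indicator measurableSet_Icc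
  have hβ'i : Integrable β' := hβ_int.integrable_indicator measurableSet_Icc
  have hα'eq : ∀ s ∈ Icc (0:ℝ) T, α' s = α s := fun s h => indicator_of_mem h α
  have hβ'eq : ∀ s ∈ Icc (0:ℝ) T, β' s = β s := fun s h => indicator_of_mem h β
  -- integral congruences
  have hcongr : ∀ (f f' : ℝ → ℝ) (t s : ℝ), t ∈ Icc (0:ℝ) T → s ∈ Icc (0:ℝ) T → t ≤ s →
      (∀ r ∈ Icc (0:ℝ) T, f r = f' r) → (∫ r in t..s, f r) = ∫ r in t..s, f' r := by
    intro f f' t s ht hs hts hff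
    rw [intervalIntegral.integral_of_le hts, intervalIntegral.integral_of_le hts]
    exact setIntegral_congr_fun measurableSet_Ioc
      (fun r hr => hff r ⟨ht.1.trans hr.1.le, hr.2.trans hs.2⟩)
  have hTmem : T ∈ Icc (0:ℝ) T := ⟨hT.le, le_refl T⟩
  -- apply the auxiliary theorem
  have haux := aux_gronwall T hT a α' β' x' hα'meas hβ'meas ha_nonneg hα'0 hβ'0 ha_anti
    hα'i hβ'i hx'c hx'0 hx'b ?_
  · intro t ht
    have h1 := haux t ht
    rw [hx'eq t ht] at h1
    have h2 : (∫ s in t..T, β' s) = ∫ s in t..T, β s :=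
      hcongr β' β t T ht hTmem ht.2 hβ'eq
    have h3 : (∫ s in t..T, α' s * Real.exp (∫ r in t..s, β' r))
        = ∫ s in t..T, α s * Real.exp (∫ r in t..s, β r) := by
      rw [intervalIntegral.integral_of_le ht.2, intervalIntegral.integral_of_le ht.2]
      refine setIntegral_congr_fun measurableSet_Ioc (fun s hs => ?_)
      have hsmem : s ∈ Icc (0:ℝ) T := ⟨ht.1.trans hs.1.le, hs.2⟩
      rw [hα'eq s hsmem, hcongr β' β t s ht hsmem hs.1.le hβ'eq]
    rw [h2, h3] at h1
    exact h1
  · intro t ht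
    rw [hx'eq t ht]
    have h4 : (∫ s in t..T, α' s * x' s) = ∫ s in t..T, α s * x s := by
      refine hcongr _ _ t T ht hTmem ht.2 (fun r hr => ?_)
      rw [hα'eq r hr, hx'eq r hr]
    have h5 : (∫ s in t..T, β' s * x' s ^ 2) = ∫ s in t..T, β s * x s ^ 2 := by
      refine hcongr _ _ t T ht hTmem ht.2 (fun r hr => ?_)
      rw [hβ'eq r hr, hx'eq r hr]
    rw [h4, h5]
    exact hineq t ht
end
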